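/- arXiv:1508.01062 — 3 statements merged into one kernel-verified Lean document; each statement's English description precedes it below -/
import Mathlib

section
/- There exists Δ₀ such that for every Δ ≥ Δ₀ the following holds: every simple graph G of maximum degree Δ contains a spanning subgraph H ⊆ G such that every vertex v with d_G(v) ≥ Δ/3 satisfies d_H(v) ≥ 2, and every vertex v satisfies d_H(v) ≤ 15·ln Δ. -/
open Real

private lemma subsingleton_ncard_le_one {α : Type*} {s : Set α} (h : s.Subsingleton) :
    s.ncard ≤ 1 := by
  rcases h.eq_empty_or_singleton with rfl | ⟨a, rfl⟩ <;> simp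

private lemma double_count {V : Type} [Fintype V] [DecidableEq V]
    (G : SimpleGraph V) [DecidableRel G.Adj] {Δ : ℕ}
    (hd : ∀ v, G.degree v ≤ Δ) {ι : Type} [DecidableEq ι]
    (A : Finset ι) (e : ι → V) (he : Function.Injective e)
    (t : ι → Finset V) (ht : ∀ i, t i ⊆ G.neighborFinset (e i)) :
    ∑ i ∈ A, (t i).card ≤ Δ * (A.biUnion t).card := by
  calc ∑ i ∈ A, (t i).card
      = ∑ i ∈ A, ((A.biUnion t).filter (fun w => w ∈ t i)).card := by
        refine Finset.sum_congr rfl fun i hi => ?_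
        congr 1
        ext w
        simp only [Finset.mem_filter, Finset.mem_biUnion]
        exact ⟨fun hw => ⟨⟨i, hi, hw⟩, hw⟩, fun h => h.2⟩
    _ = ∑ w ∈ A.biUnion t, (A.filter (fun i => w ∈ t i)).card := by
        simp only [Finset.card_filter]
        exact Finset.sum_comm
    _ ≤ ∑ _w ∈ A.biUnion t, Δ := by
        refine Finset.sum_le_sum fun w _hw => ?_
        have h1 : (A.filter (fun i => w ∈ t i)).card ≤ (G.neighborFinset w).card := by
          refine Finset.card_le_card_of_injOn e ?_ ?_
          · intro i hi
            simp only [Finset.coe_filter, Finset.mem_coe, Finset.mem_filter, Set.mem_setOf_eq] at hi ⊢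
            have h2 := ht i hi.2
            rw [SimpleGraph.mem_neighborFinset] at h2 ⊢
            exact h2.symm
          · exact fun a _ b _ h => he h
        calc (A.filter (fun i => w ∈ t i)).card ≤ (G.neighborFinset w).card := h1
          _ = G.degree w := rfl
          _ ≤ Δ := hd w
    _ = Δ * (A.biUnion t).card := by rw [Finset.sum_const, smul_eq_mul, Nat.mul_comm]

private lemma hall_step {V : Type} [Fintype V] [DecidableEq V]
    (G : SimpleGraph V) [DecidableRel G.Adj] {Δ k : ℕ} (hΔ : 0 < Δ)
    (hd : ∀ v, G.degree v ≤ Δ) {ι : Type} [DecidableEq ι]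
    (e : ι → V) (he : Function.Injective e)
    (t : ι → Finset V) (ht : ∀ i, t i ⊆ G.neighborFinset (e i))
    (hk : ∀ i, Δ ≤ k * (t i).card)
    (A : Finset ι) :
    A.card ≤ (A.biUnion fun i => t i ×ˢ (Finset.univ : Finset (Fin k))).card := by
  have hU : A.biUnion (fun i => t i ×ˢ (Finset.univ : Finset (Fin k)))
      = (A.biUnion t) ×ˢ (Finset.univ : Finset (Fin k)) := by
    ext ⟨w, j⟩
    simp only [Finset.mem_biUnion, Finset.mem_product, Finset.mem_univ, and_true]
  rw [hU, Finset.card_product, Finset.card_univ, Fintype.card_fin]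
  have h1 : Δ * A.card ≤ Δ * ((A.biUnion t).card * k) := by
    calc Δ * A.card = ∑ _i ∈ A, Δ := by rw [Finset.sum_const, smul_eq_mul, Nat.mul_comm]
      _ ≤ ∑ i ∈ A, k * (t i).card := Finset.sum_le_sum fun i _ => hk i
      _ = k * ∑ i ∈ A, (t i).card := by rw [Finset.mul_sum]
      _ ≤ k * (Δ * (A.biUnion t).card) :=
          Nat.mul_le_mul_left _ (double_count G hd A e he t ht)
      _ = Δ * ((A.biUnion t).card * k) := by ring
  exact Nat.le_of_mul_le_mul_left h1 hΔ

/-- For sufficiently large `Δ`, every graph `G` of maximum degree `Δ` contains a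
spanning subgraph `H` in which every vertex of `G`-degree at least `Δ/3` has degree
at least `2`, and every vertex has degree at most `15 ln Δ`. -/
theorem exists_sparse_spanning_subgraph :
    ∃ Δ₀ : ℕ, ∀ Δ : ℕ, Δ₀ ≤ Δ →
    ∀ (V : Type) [Fintype V] [DecidableEq V] (G : SimpleGraph V) [DecidableRel G.Adj],
    G.maxDegree = Δ →
    ∃ H : SimpleGraph V, H ≤ G ∧
      (∀ v : V, (Δ : ℝ) / 3 ≤ (G.degree v : ℝ) → 2 ≤ (H.neighborSet v).ncard) ∧
      (∀ v : V, ((H.neighborSet v).ncard : ℝ) ≤ 15 * Real.log Δ) := by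
  classical
  refine ⟨12, fun Δ hΔ12 V _ _ G _ hmax => ?_⟩
  have hΔ0 : 0 < Δ := by omega
  have hd : ∀ v, G.degree v ≤ Δ := fun v => hmax ▸ G.degree_le_maxDegree v
  set P : V → Prop := fun v => (Δ : ℝ) / 3 ≤ (G.degree v : ℝ) with hP
  have hdeg : ∀ u : {v : V // P v}, Δ ≤ 3 * G.degree u.1 := by
    intro u
    have h0 : (Δ : ℝ) / 3 ≤ (G.degree u.1 : ℝ) := u.2
    have h1 : (Δ : ℝ) ≤ 3 * (G.degree u.1 : ℝ) := by linarith
    exact_mod_cast h1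
  -- Round 1 : each high vertex picks a neighbour, each vertex picked ≤ 3 times
  obtain ⟨f₁, hf₁inj, hf₁⟩ := (Finset.all_card_le_biUnion_card_iff_exists_injective
      (fun u : {v : V // P v} =>
        (G.neighborFinset u.1) ×ˢ (Finset.univ : Finset (Fin 3)))).mp
    (hall_step G hΔ0 hd Subtype.val Subtype.val_injective
      (fun u => G.neighborFinset u.1) (fun _ => le_refl _)
      (fun u => by
        show Δ ≤ 3 * (G.neighborFinset u.1).card
        have h := hdeg u
        have h3 : (G.neighborFinset u.1).card = G.degree u.1 := rfl
        omega))
  -- Round 2 : each high vertex picks a second (distinct) neighbour, picked ≤ 4 times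
  obtain ⟨f₂, hf₂inj, hf₂⟩ := (Finset.all_card_le_biUnion_card_iff_exists_injective
      (fun u : {v : V // P v} =>
        ((G.neighborFinset u.1).erase (f₁ u).1) ×ˢ (Finset.univ : Finset (Fin 4)))).mp
    (hall_step G hΔ0 hd Subtype.val Subtype.val_injective
      (fun u => (G.neighborFinset u.1).erase (f₁ u).1)
      (fun u => Finset.erase_subset _ _)
      (fun u => by
        show Δ ≤ 4 * ((G.neighborFinset u.1).erase (f₁ u).1).card
        have h := hdeg u
        have h2 : (G.neighborFinset u.1).card - 1 ≤ ((G.neighborFinset u.1).erase (f₁ u).1).card :=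
          Finset.pred_card_le_card_erase
        have h3 : (G.neighborFinset u.1).card = G.degree u.1 := rfl
        omega))
  set r : V → V → Prop := fun a b =>
    ∃ u : {v : V // P v}, u.1 = a ∧ ((f₁ u).1 = b ∨ (f₂ u).1 = b) with hr
  have hradj : ∀ a b, r a b → G.Adj a b := by
    rintro a b ⟨u, rfl, h | h⟩
    · have h1 := hf₁ u
      rw [Finset.mem_product] at h1
      have h2 := h1.1
      rw [SimpleGraph.mem_neighborFinset] at h2
      rwa [h] at h2
    · have h1 := hf₂ u
      rw [Finset.mem_product] at h1
      have h2 := Finset.mem_of_mem_erase h1.1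
      rw [SimpleGraph.mem_neighborFinset] at h2
      rwa [h] at h2
  refine ⟨SimpleGraph.fromRel r, ?_, ?_, ?_⟩
  · intro a b hab
    rcases hab with ⟨hne, h | h⟩
    · exact hradj a b h
    · exact (hradj b a h).symm
  · -- lower bound
    intro v hv
    set u : {v : V // P v} := ⟨v, hv⟩ with hu
    have h1 := hf₁ u
    rw [Finset.mem_product] at h1
    have h2 := hf₂ u
    rw [Finset.mem_product] at h2
    have hb2 : (f₂ u).1 ≠ (f₁ u).1 := Finset.ne_of_mem_erase h2.1
    have hadj1 : (SimpleGraph.fromRel r).Adj v (f₁ u).1 := by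
      refine ⟨(hradj v (f₁ u).1 ⟨u, rfl, Or.inl rfl⟩).ne, Or.inl ⟨u, rfl, Or.inl rfl⟩⟩
    have hadj2 : (SimpleGraph.fromRel r).Adj v (f₂ u).1 := by
      refine ⟨(hradj v (f₂ u).1 ⟨u, rfl, Or.inr rfl⟩).ne, Or.inl ⟨u, rfl, Or.inr rfl⟩⟩
    have hsub : ({(f₁ u).1, (f₂ u).1} : Set V) ⊆ (SimpleGraph.fromRel r).neighborSet v := by
      rintro x (rfl | rfl)
      · exact hadj1
      · exact hadj2
    have := Set.ncard_le_ncard hsub (Set.toFinite _)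
    rwa [Set.ncard_pair (Ne.symm hb2)] at this
  · -- upper bound
    intro v
    have key : ((SimpleGraph.fromRel r).neighborSet v).ncard ≤ 9 := by
      set S₁ : Set V := (fun u : {x : V // P x} => (f₁ u).1) '' {u | u.1 = v} with hS₁
      set S₂ : Set V := (fun u : {x : V // P x} => (f₂ u).1) '' {u | u.1 = v} with hS₂
      set S₃ : Set V := Subtype.val '' {u : {x : V // P x} | (f₁ u).1 = v} with hS₃
      set S₄ : Set V := Subtype.val '' {u : {x : V // P x} | (f₂ u).1 = v} with hS₄
      have hsub : (SimpleGraph.fromRel r).neighborSet v ⊆ S₁ ∪ S₂ ∪ S₃ ∪ S₄ := by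
        rintro b ⟨hne, h | h⟩
        · rcases h with ⟨u, hu, h | h⟩
          · exact Or.inl (Or.inl (Or.inl ⟨u, hu, h⟩))
          · exact Or.inl (Or.inl (Or.inr ⟨u, hu, h⟩))
        · rcases h with ⟨u, hu, h | h⟩
          · exact Or.inl (Or.inr ⟨u, h, hu⟩)
          · exact Or.inr ⟨u, h, hu⟩
      have hss : ({u : {x : V // P x} | u.1 = v} : Set _).Subsingleton := by
        rintro a ha b hb
        exact Subtype.ext (ha.trans hb.symm)
      have h1 : S₁.ncard ≤ 1 :=
        le_trans (Set.ncard_image_le (Set.toFinite _)) (subsingleton_ncard_le_one hss)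
      have h2 : S₂.ncard ≤ 1 :=
        le_trans (Set.ncard_image_le (Set.toFinite _)) (subsingleton_ncard_le_one hss)
      have h3 : S₃.ncard ≤ 3 := by
        refine le_trans (Set.ncard_image_le (Set.toFinite _)) ?_
        have := Set.ncard_le_ncard_of_injOn
          (s := {u : {x : V // P x} | (f₁ u).1 = v}) (t := (Set.univ : Set (Fin 3)))
          (fun u => (f₁ u).2) (fun a _ => Set.mem_univ _)
          (fun a ha b hb hab => hf₁inj (Prod.ext (ha.trans hb.symm) hab))
          (Set.toFinite _)
        simpa [Set.ncard_univ] using this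
      have h4 : S₄.ncard ≤ 4 := by
        refine le_trans (Set.ncard_image_le (Set.toFinite _)) ?_
        have := Set.ncard_le_ncard_of_injOn
          (s := {u : {x : V // P x} | (f₂ u).1 = v}) (t := (Set.univ : Set (Fin 4)))
          (fun u => (f₂ u).2) (fun a _ => Set.mem_univ _)
          (fun a ha b hb hab => hf₂inj (Prod.ext (ha.trans hb.symm) hab))
          (Set.toFinite _)
        simpa [Set.ncard_univ] using this
      calc ((SimpleGraph.fromRel r).neighborSet v).ncard
          ≤ (S₁ ∪ S₂ ∪ S₃ ∪ S₄).ncard := Set.ncard_le_ncard hsub (Set.toFinite _)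
        _ ≤ (S₁ ∪ S₂ ∪ S₃).ncard + S₄.ncard := Set.ncard_union_le _ _
        _ ≤ (S₁ ∪ S₂).ncard + S₃.ncard + S₄.ncard := by
            have := Set.ncard_union_le (S₁ ∪ S₂) S₃; omega
        _ ≤ S₁.ncard + S₂.ncard + S₃.ncard + S₄.ncard := by
            have := Set.ncard_union_le S₁ S₂; omega
        _ ≤ 9 := by omega
    have hlog : (1 : ℝ) ≤ Real.log Δ := by
      rw [Real.le_log_iff_exp_le (by exact_mod_cast hΔ0)]
      calc Real.exp 1 ≤ 2.7182818286 := Real.exp_one_lt_d9.le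
        _ ≤ (12 : ℝ) := by norm_num
        _ ≤ (Δ : ℝ) := by exact_mod_cast hΔ12
    have : (((SimpleGraph.fromRel r).neighborSet v).ncard : ℝ) ≤ 9 := by exact_mod_cast key
    linarith
end

section
/- Let A₁, A₂, …, Aₙ be events in a probability space. Suppose there is an integer D ≥ 0 and a real p ≥ 0 such that each event Aᵢ is mutually independent of all but at most D of the other events A_j, and Pr(Aᵢ) ≤ p for all 1 ≤ i ≤ n. If e·p·(D+1) ≤ 1, then Pr(⋂_{i=1}^{n} Aᵢᶜ) > 0. -/
open MeasureTheory

/-- The symmetric Lovász Local Lemma. Each event `A i` is mutually independent of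
all events `A j` with `j ≠ i` outside the dependency set `Γ i` of size at most `D`;
if `Pr(A i) ≤ p` for all `i` and `e·p·(D+1) ≤ 1`, then with positive probability
none of the events occurs. -/
theorem lovasz_local_lemma_symmetric
    {Ω : Type*} [MeasurableSpace Ω] (μ : Measure Ω) [IsProbabilityMeasure μ]
    (n : ℕ) (A : Fin n → Set Ω) (hA : ∀ i, MeasurableSet (A i))
    (D : ℕ) (p : ℝ) (hp : 0 ≤ p)
    (Γ : Fin n → Finset (Fin n))
    (hΓ : ∀ i, (Γ i).card ≤ D)
    (hindep : ∀ i : Fin n, ∀ S : Finset (Fin n),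
      (∀ j ∈ S, j ≠ i ∧ j ∉ Γ i) →
      μ (A i ∩ ⋂ j ∈ S, (A j)ᶜ) = μ (A i) * μ (⋂ j ∈ S, (A j)ᶜ))
    (hbound : ∀ i, (μ (A i)).toReal ≤ p)
    (hcond : Real.exp 1 * p * (D + 1) ≤ 1) :
    0 < μ (⋂ i, (A i)ᶜ) := by
  classical
  set x : ℝ := ((D : ℝ) + 2)⁻¹ with hxdef
  have hD2 : (0:ℝ) < (D:ℝ) + 2 := by positivity
  have hxpos : 0 < x := by positivity
  have hx1 : x < 1 := by
    rw [hxdef, inv_lt_one_iff₀]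
    right; linarith
  have h1x : (0:ℝ) < 1 - x := by linarith
  -- the numeric inequality p ≤ x (1-x)^D
  have hpx : p ≤ x * (1 - x) ^ D := by
    have he : (0:ℝ) < Real.exp 1 := Real.exp_pos 1
    have hD1 : (0:ℝ) < (D:ℝ) + 1 := by positivity
    have key : ((D:ℝ) + 2) ^ (D + 1) ≤ Real.exp 1 * ((D:ℝ) + 1) ^ (D + 1) := by
      have h1 : (1 + ((D:ℝ)+1)⁻¹) ^ (D+1) ≤ Real.exp 1 := by
        have h2 : (1 + ((D:ℝ)+1)⁻¹) ≤ Real.exp (((D:ℝ)+1)⁻¹) := by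
          have := Real.add_one_le_exp (((D:ℝ)+1)⁻¹)
          linarith
        calc (1 + ((D:ℝ)+1)⁻¹) ^ (D+1) ≤ (Real.exp (((D:ℝ)+1)⁻¹)) ^ (D+1) := by
              apply pow_le_pow_left₀ (by positivity) h2
          _ = Real.exp (((D:ℝ)+1)⁻¹ * ((D:ℕ)+1 : ℕ)) := by
              rw [← Real.exp_nat_mul]; ring_nf
          _ = Real.exp 1 := by
              rw [show (((D:ℕ)+1 : ℕ) : ℝ) = (D:ℝ)+1 by push_cast; ring,
                inv_mul_cancel₀ (ne_of_gt hD1)]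
      have h3 : ((1 + ((D:ℝ)+1)⁻¹) * ((D:ℝ)+1)) ^ (D+1)
          ≤ Real.exp 1 * ((D:ℝ)+1) ^ (D+1) := by
        rw [mul_pow]
        exact mul_le_mul_of_nonneg_right h1 (by positivity)
      have h4 : (1 + ((D:ℝ)+1)⁻¹) * ((D:ℝ)+1) = (D:ℝ) + 2 := by
        field_simp; ring
      rwa [h4] at h3
    have hpe : p ≤ 1 / (Real.exp 1 * ((D:ℝ)+1)) := by
      rw [le_div_iff₀ (by positivity)]
      nlinarith [hcond]
    have h1mx : (1 - x) = ((D:ℝ)+1) / ((D:ℝ)+2) := by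
      rw [hxdef]; field_simp; ring
    have hxval : x * (1 - x) ^ D = ((D:ℝ)+1)^D / ((D:ℝ)+2)^(D+1) := by
      rw [hxdef, h1mx, div_pow, pow_succ]
      field_simp
    have hxe : 1 / (Real.exp 1 * ((D:ℝ)+1)) ≤ x * (1 - x) ^ D := by
      rw [hxval, div_le_div_iff₀ (by positivity) (by positivity)]
      have hps : ((D:ℝ)+1)^(D+1) = ((D:ℝ)+1)^D * ((D:ℝ)+1) := pow_succ _ _
      nlinarith [key]
    linarith
  -- notation
  have hmeas : ∀ S : Finset (Fin n), MeasurableSet (⋂ j ∈ S, (A j)ᶜ) := fun S =>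
    Finset.measurableSet_biInter S (fun j _ => (hA j).compl)
  have hfin : ∀ s : Set Ω, μ s ≠ ⊤ := fun s => measure_ne_top μ s
  have hsplit : ∀ (k : Fin n) (S : Finset (Fin n)),
      (μ (⋂ j ∈ insert k S, (A j)ᶜ)).toReal
        = (μ (⋂ j ∈ S, (A j)ᶜ)).toReal - (μ (A k ∩ ⋂ j ∈ S, (A j)ᶜ)).toReal := by
    intro k S
    have h1 : μ ((⋂ j ∈ S, (A j)ᶜ) ∩ A k) + μ ((⋂ j ∈ S, (A j)ᶜ) \ A k)
        = μ (⋂ j ∈ S, (A j)ᶜ) := measure_inter_add_diff _ (hA k)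
    have h2 : (⋂ j ∈ insert k S, (A j)ᶜ) = (⋂ j ∈ S, (A j)ᶜ) \ A k := by
      rw [Finset.set_biInter_insert, Set.diff_eq, Set.inter_comm]
    have h3 : A k ∩ ⋂ j ∈ S, (A j)ᶜ = (⋂ j ∈ S, (A j)ᶜ) ∩ A k := Set.inter_comm _ _
    rw [h2, h3]
    have h4 := congrArg ENNReal.toReal h1
    rw [ENNReal.toReal_add (hfin _) (hfin _)] at h4
    linarith
  -- the main claim, by strong induction on |S|
  have key : ∀ m : ℕ, ∀ S : Finset (Fin n), S.card ≤ m → ∀ i : Fin n,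
      (μ (A i ∩ ⋂ j ∈ S, (A j)ᶜ)).toReal ≤ x * (μ (⋂ j ∈ S, (A j)ᶜ)).toReal := by
    intro m
    induction m with
    | zero =>
      intro S hS i
      have hSe : S = ∅ := Finset.card_eq_zero.mp (Nat.le_zero.mp hS)
      subst hSe
      simp only [Finset.notMem_empty, Set.iInter_of_empty, Set.iInter_univ,
        Set.inter_univ, measure_univ, ENNReal.toReal_one, mul_one]
      calc (μ (A i)).toReal ≤ p := hbound i
        _ ≤ x * (1-x)^D := hpx
        _ ≤ x * 1 := by
            apply mul_le_mul_of_nonneg_left _ hxpos.le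
            exact pow_le_one₀ h1x.le (by linarith)
        _ = x := mul_one x
    | succ m ih =>
      intro S hS i
      by_cases hiS : i ∈ S
      · have hempty : A i ∩ ⋂ j ∈ S, (A j)ᶜ = ∅ := by
          apply Set.eq_empty_of_subset_empty
          intro ω hω
          have h1 : ω ∈ A i := hω.1
          have h2 : ω ∈ (A i)ᶜ := by
            have := hω.2
            simp only [Set.mem_iInter] at this
            exact this i hiS
          exact h2 h1
        rw [hempty]
        simp only [measure_empty, ENNReal.toReal_zero]
        positivity
      · set S₁ : Finset (Fin n) := S.filter (fun j => j ∈ Γ i) with hS₁def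
        set S₂ : Finset (Fin n) := S.filter (fun j => j ∉ Γ i) with hS₂def
        have hunion : S₁ ∪ S₂ = S := Finset.filter_union_filter_not_eq _ S
        have hdisj : Disjoint S₁ S₂ := by
          apply Finset.disjoint_filter_filter_not
        have hcards : S₁.card + S₂.card = S.card := by
          rw [← Finset.card_union_of_disjoint hdisj, hunion]
        have hS₁card : S₁.card ≤ D := by
          refine le_trans (Finset.card_le_card ?_) (hΓ i)
          intro j hj
          exact (Finset.mem_filter.mp hj).2
        -- inner claim: peeling off elements of S₁
        have inner : ∀ T : Finset (Fin n), T ⊆ S₁ →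
            (1-x) ^ T.card * (μ (⋂ j ∈ S₂, (A j)ᶜ)).toReal
              ≤ (μ (⋂ j ∈ T ∪ S₂, (A j)ᶜ)).toReal := by
          intro T
          induction T using Finset.induction_on with
          | empty => intro _; simp
          | @insert k T hkT ihT =>
            intro hsub
            have hTsub : T ⊆ S₁ := fun j hj => hsub (Finset.mem_insert_of_mem hj)
            have hk1 : k ∈ S₁ := hsub (Finset.mem_insert_self k T)
            have hcardlt : (T ∪ S₂).card ≤ m := by
              have h1 : (insert k T).card ≤ S₁.card := Finset.card_le_card hsub
              have h2 : (insert k T).card = T.card + 1 := Finset.card_insert_of_notMem hkT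
              have h3 : (T ∪ S₂).card ≤ T.card + S₂.card := Finset.card_union_le T S₂
              omega
            have hih := ih (T ∪ S₂) hcardlt k
            have hihT := ihT hTsub
            have hins : (insert k T) ∪ S₂ = insert k (T ∪ S₂) := by
              rw [Finset.insert_union]
            rw [hins, hsplit k (T ∪ S₂), Finset.card_insert_of_notMem hkT, pow_succ]
            nlinarith [ENNReal.toReal_nonneg (a := μ (⋂ j ∈ T ∪ S₂, (A j)ᶜ)),
              ENNReal.toReal_nonneg (a := μ (⋂ j ∈ S₂, (A j)ᶜ)),
              pow_nonneg h1x.le T.card]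
        have hinner := inner S₁ (Finset.Subset.refl S₁)
        -- independence over S₂
        have hindS₂ : μ (A i ∩ ⋂ j ∈ S₂, (A j)ᶜ) = μ (A i) * μ (⋂ j ∈ S₂, (A j)ᶜ) := by
          apply hindep i S₂
          intro j hj
          rw [hS₂def, Finset.mem_filter] at hj
          exact ⟨fun h => hiS (h ▸ hj.1), hj.2⟩
        -- monotonicity
        have hmono : (μ (A i ∩ ⋂ j ∈ S, (A j)ᶜ)).toReal
            ≤ (μ (A i ∩ ⋂ j ∈ S₂, (A j)ᶜ)).toReal := by
          apply ENNReal.toReal_mono (hfin _)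
          apply measure_mono
          apply Set.inter_subset_inter_right
          intro ω hω
          simp only [Set.mem_iInter] at hω ⊢
          exact fun j hj => hω j (Finset.filter_subset _ S hj)
        have hprob : (μ (A i ∩ ⋂ j ∈ S₂, (A j)ᶜ)).toReal
            = (μ (A i)).toReal * (μ (⋂ j ∈ S₂, (A j)ᶜ)).toReal := by
          rw [hindS₂, ENNReal.toReal_mul]
        have hS2nn : (0:ℝ) ≤ (μ (⋂ j ∈ S₂, (A j)ᶜ)).toReal := ENNReal.toReal_nonneg
        have hpowle : (1-x)^D ≤ (1-x)^(S₁.card) :=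
          pow_le_pow_of_le_one h1x.le (by linarith) hS₁card
        have hSrw : (⋂ j ∈ S, (A j)ᶜ) = ⋂ j ∈ S₁ ∪ S₂, (A j)ᶜ := by rw [hunion]
        calc (μ (A i ∩ ⋂ j ∈ S, (A j)ᶜ)).toReal
            ≤ (μ (A i)).toReal * (μ (⋂ j ∈ S₂, (A j)ᶜ)).toReal := by
              rw [← hprob]; exact hmono
          _ ≤ (x * (1-x)^(S₁.card)) * (μ (⋂ j ∈ S₂, (A j)ᶜ)).toReal := by
              apply mul_le_mul_of_nonneg_right _ hS2nn
              calc (μ (A i)).toReal ≤ p := hbound i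
                _ ≤ x * (1-x)^D := hpx
                _ ≤ x * (1-x)^(S₁.card) := mul_le_mul_of_nonneg_left hpowle hxpos.le
          _ = x * ((1-x)^(S₁.card) * (μ (⋂ j ∈ S₂, (A j)ᶜ)).toReal) := by ring
          _ ≤ x * (μ (⋂ j ∈ S₁ ∪ S₂, (A j)ᶜ)).toReal :=
              mul_le_mul_of_nonneg_left hinner hxpos.le
          _ = x * (μ (⋂ j ∈ S, (A j)ᶜ)).toReal := by rw [hSrw]
  -- final peeling
  have final : ∀ T : Finset (Fin n), (1-x) ^ T.card ≤ (μ (⋂ j ∈ T, (A j)ᶜ)).toReal := by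
    intro T
    induction T using Finset.induction_on with
    | empty => simp
    | @insert k T hkT ihT =>
      rw [hsplit k T, Finset.card_insert_of_notMem hkT, pow_succ]
      have hk := key T.card T le_rfl k
      nlinarith [pow_nonneg h1x.le T.card,
        ENNReal.toReal_nonneg (a := μ (⋂ j ∈ T, (A j)ᶜ))]
  have hfinal := final Finset.univ
  have huniv : (⋂ i, (A i)ᶜ) = ⋂ j ∈ (Finset.univ : Finset (Fin n)), (A j)ᶜ := by
    simp
  rw [huniv]
  rw [pos_iff_ne_zero]
  intro hzero
  rw [hzero] at hfinal
  simp only [ENNReal.toReal_zero] at hfinal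
  have : (0:ℝ) < (1-x) ^ (Finset.univ : Finset (Fin n)).card := pow_pos h1x _
  linarith
end

section
/- Every connected simple graph with at least 3 vertices admits an edge labelling c : E → {1,2,3,4,5} such that Σ_{e∋u} c(e) ≠ Σ_{e∋v} c(e) for every edge uv ∈ E. -/
set_option maxHeartbeats 1000000
open Finset
namespace KKP



/-- L2: any integer interval of length `2k+3` contains at least `k+1` elements
    that are `≡ 0` or `1 (mod 4)`. -/
lemma mod4_count (a : ℤ) (k : ℕ) :
    k + 1 ≤ ((Finset.Icc a (a + 2*k + 2)).filter (fun x => x % 4 = 0 ∨ x % 4 = 1)).card := by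
  obtain ⟨s0, hs0a, hs0⟩ : ∃ s0 : ℤ, a ≤ s0 ∧
      ((s0 % 4 = 0 ∧ s0 ≤ a + 2) ∨ (s0 % 4 = 1 ∧ s0 ≤ a + 1)) := by
    have h4 : a % 4 = 0 ∨ a % 4 = 1 ∨ a % 4 = 2 ∨ a % 4 = 3 := by omega
    rcases h4 with h | h | h | h
    · exact ⟨a, le_refl _, Or.inl ⟨h, by omega⟩⟩
    · exact ⟨a, le_refl _, Or.inr ⟨h, by omega⟩⟩
    · exact ⟨a + 2, by omega, Or.inl ⟨by omega, by omega⟩⟩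
    · exact ⟨a + 1, by omega, Or.inl ⟨by omega, by omega⟩⟩
  rcases hs0 with ⟨hm, hb⟩ | ⟨hm, hb⟩
  · -- s0 ≡ 0 mod 4, pattern s0 + 4*(j/2) + (j%2)
    set f : ℕ → ℤ := fun j => s0 + 4*(j/2 : ℕ) + ((j%2 : ℕ) : ℤ) with hf
    have : (Finset.range (k+1)).card ≤
        ((Finset.Icc a (a + 2*k + 2)).filter (fun x => x % 4 = 0 ∨ x % 4 = 1)).card := by
      apply Finset.card_le_card_of_injOn f
      · intro j hj
        simp only [Finset.mem_coe, Finset.mem_range] at hj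
        have hj' : j ≤ k := by omega
        have h2 : 2*(j/2) + j%2 = j := by omega
        simp only [Finset.mem_coe, Finset.mem_filter, Finset.mem_Icc, hf]
        have h3 : j % 2 = 0 ∨ j % 2 = 1 := by omega
        rcases h3 with h3 | h3 <;> rw [h3] <;>
          refine ⟨⟨by omega, by omega⟩, by omega⟩
      · intro j hj j' hj' heq
        simp only [hf] at heq
        omega
    simpa using this
  · set f : ℕ → ℤ := fun j => s0 + 4*(j/2 : ℕ) + 3*((j%2 : ℕ) : ℤ) with hf
    have : (Finset.range (k+1)).card ≤
        ((Finset.Icc a (a + 2*k + 2)).filter (fun x => x % 4 = 0 ∨ x % 4 = 1)).card := by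
      apply Finset.card_le_card_of_injOn f
      · intro j hj
        simp only [Finset.mem_coe, Finset.mem_range] at hj
        have hj' : j ≤ k := by omega
        have h2 : 2*(j/2) + j%2 = j := by omega
        simp only [Finset.mem_coe, Finset.mem_filter, Finset.mem_Icc, hf]
        have h3 : j % 2 = 0 ∨ j % 2 = 1 := by omega
        rcases h3 with h3 | h3 <;> rw [h3] <;>
          refine ⟨⟨by omega, by omega⟩, by omega⟩
      · intro j hj j' hj' heq
        simp only [hf] at heq
        omega
    simpa using this

/-- L6 : decomposition of a shift into an even part in range and a tweak in {0,-1,-2}. -/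
lemma exists_decomp (m p : ℕ) (q : ℤ) (h1 : -(2*m) - 2 ≤ q) (h2 : q ≤ 2*p) :
    ∃ t rr : ℤ, -(m:ℤ) ≤ t ∧ t ≤ p ∧ (rr = 0 ∨ rr = -1 ∨ rr = -2) ∧ q = 2*t + rr := by
  by_cases h0 : q = -(2*m) - 2
  · exact ⟨-(m:ℤ), -2, by omega, by omega, by tauto, by omega⟩
  · rcases Int.even_or_odd q with ⟨c, hc⟩ | ⟨c, hc⟩
    · exact ⟨c, 0, by omega, by omega, by tauto, by omega⟩
    · exact ⟨c + 1, -1, by omega, by omega, by tauto, by omega⟩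

/-- L7 : two "doubletons" with distinct anchors that are ≡ 0 or 1 mod 4 are disjoint. -/
lemma doubleton_disj {α β a b : ℤ} (hα : α % 4 = 0 ∨ α % 4 = 1) (hβ : β % 4 = 0 ∨ β % 4 = 1)
    (hne : α ≠ β) (ha : a = α ∨ a = α + 2) (hb : b = β ∨ b = β + 2) : a ≠ b := by
  omega

variable {V : Type} [DecidableEq V]

/-- L1: signed subset sums cover the whole interval [-m, p]. -/
lemma exists_signed_subset (J : Finset V) (σ : V → ℤ) (hσ : ∀ j ∈ J, σ j = 1 ∨ σ j = -1)
    (t : ℤ) (hlo : -((J.filter (fun j => σ j = -1)).card : ℤ) ≤ t)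
    (hhi : t ≤ ((J.filter (fun j => σ j = 1)).card : ℤ)) :
    ∃ T ⊆ J, ∑ j ∈ T, σ j = t := by
  rcases le_or_gt 0 t with ht | ht
  · obtain ⟨T, hTsub, hTcard⟩ := Finset.exists_subset_card_eq
      (s := J.filter (fun j => σ j = 1)) (n := t.toNat) (by omega)
    refine ⟨T, hTsub.trans (Finset.filter_subset _ _), ?_⟩
    have : ∀ j ∈ T, σ j = 1 := fun j hj => (Finset.mem_filter.1 (hTsub hj)).2
    rw [Finset.sum_congr rfl this, Finset.sum_const, hTcard]
    simp; omega
  · obtain ⟨T, hTsub, hTcard⟩ := Finset.exists_subset_card_eq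
      (s := J.filter (fun j => σ j = -1)) (n := (-t).toNat) (by omega)
    refine ⟨T, hTsub.trans (Finset.filter_subset _ _), ?_⟩
    have : ∀ j ∈ T, σ j = -1 := fun j hj => (Finset.mem_filter.1 (hTsub hj)).2
    rw [Finset.sum_congr rfl this, Finset.sum_const, hTcard]
    simp; omega

/-- mass bound: the slots A_w are disjoint subsets of J. -/
lemma mass_le (J : Finset V) (d : V → ℤ) (k : ℕ) :
    ∑ w ∈ Finset.range (k+1), ((J.filter (fun j => d j = (w:ℤ))).card) ≤ J.card := by
  classical
  rw [← Finset.card_biUnion]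
  · apply Finset.card_le_card
    intro x hx
    simp only [Finset.mem_biUnion] at hx
    obtain ⟨w, _, hw⟩ := hx
    exact (Finset.mem_filter.1 hw).1
  · intro w _ w' _ hww'
    show Disjoint _ _
    rw [Finset.disjoint_left]
    intro j hj hj'
    simp only [Finset.mem_filter] at hj hj'
    have : (w:ℤ) = w' := by rw [← hj.2, hj'.2]
    exact hww' (by exact_mod_cast this)

/-- two filters at distinct values have card sum ≤ card J -/
lemma two_filter_le (J : Finset V) (d : V → ℤ) {v1 v2 : ℤ} (h : v1 ≠ v2) :
    (J.filter (fun j => d j = v1)).card + (J.filter (fun j => d j = v2)).card ≤ J.card := by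
  rw [← Finset.card_union_of_disjoint]
  · exact Finset.card_le_card (Finset.union_subset (Finset.filter_subset _ _)
      (Finset.filter_subset _ _))
  · rw [Finset.disjoint_left]
    intro j hj hj'
    simp only [Finset.mem_filter] at hj hj'
    exact h (hj.2 ▸ hj'.2 ▸ rfl)

/-- D1: existence of a good level w. -/
lemma exists_good_level (J : Finset V) (d : V → ℤ) (hk : 2 ≤ J.card) :
    ∃ w : ℕ, w ≤ J.card ∧ (J.filter (fun j => d j = (w:ℤ))).card ≤ w ∧
      (J.filter (fun j => d j = (w:ℤ) - 1)).card ≤ J.card - w := by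
  set k := J.card with hkdef
  by_contra hcon
  push_neg at hcon
  -- hcon : ∀ w ≤ k, card ≤ w → k - w < card'
  have h' : ∀ w : ℕ, w ≤ k → (J.filter (fun j => d j = (w:ℤ))).card ≤ w →
      k - w < (J.filter (fun j => d j = (w:ℤ) - 1)).card := by
    intro w hw hcard
    have h2 := hcon w hw hcard
    omega
  -- no empty slot below k
  have hcore : ∀ w0, w0 < k → (J.filter (fun j => d j = (w0:ℤ))).card = 0 → False := by
    intro w0 hw0 hempty
    have hB : k - w0 < (J.filter (fun j => d j = (w0:ℤ) - 1)).card :=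
      h' w0 (le_of_lt hw0) (by omega)
    have hA : ¬ ((J.filter (fun j => d j = ((w0+1 : ℕ):ℤ))).card ≤ w0 + 1) := by
      intro hle
      have := h' (w0+1) (by omega) hle
      have heq : ((w0+1 : ℕ):ℤ) - 1 = (w0:ℤ) := by push_cast; ring
      rw [heq, hempty] at this
      omega
    have hdisj := two_filter_le J d (v1 := (w0:ℤ) - 1) (v2 := ((w0+1:ℕ):ℤ)) (by push_cast; omega)
    omega
  -- there is an empty slot in [0,k]
  have hempty : ∃ w0, w0 ≤ k ∧ (J.filter (fun j => d j = (w0:ℤ))).card = 0 := by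
    by_contra hno
    push_neg at hno
    have hmass := mass_le J d k
    have : (Finset.range (k+1)).card • 1 ≤
        ∑ w ∈ Finset.range (k+1), ((J.filter (fun j => d j = (w:ℤ))).card) := by
      apply Finset.card_nsmul_le_sum
      intro w hw
      have := hno w (by simpa using Nat.lt_succ_iff.mp (Finset.mem_range.1 hw))
      omega
    simp only [Finset.card_range, smul_eq_mul, mul_one] at this
    omega
  obtain ⟨w0, hw0le, hw0⟩ := hempty
  have hw0k : w0 = k := by
    by_contra hne
    exact hcore w0 (by omega) hw0
  -- all slots below k are nonempty
  have hpos : ∀ w, w < k → 1 ≤ (J.filter (fun j => d j = (w:ℤ))).card := by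
    intro w hw
    by_contra hle
    exact hcore w hw (by omega)
  -- at w = k-1 some slot has ≥ 2
  have hbig : ∃ u, u < k ∧ 2 ≤ (J.filter (fun j => d j = (u:ℤ))).card := by
    rcases le_or_gt ((J.filter (fun j => d j = ((k-1:ℕ):ℤ))).card) (k-1) with hle | hlt
    · have := h' (k-1) (by omega) hle
      refine ⟨k-2, by omega, ?_⟩
      have heq : ((k-1 : ℕ):ℤ) - 1 = ((k-2:ℕ):ℤ) := by push_cast [Nat.cast_sub] <;> omega
      rw [heq] at this
      omega
    · exact ⟨k-1, by omega, by omega⟩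
  obtain ⟨u, hu, hu2⟩ := hbig
  -- mass contradiction
  have hmass := mass_le J d k
  have hsum : ∑ w ∈ Finset.range (k+1), ((J.filter (fun j => d j = (w:ℤ))).card)
      ≥ k + 1 := by
    have hsub : Finset.range k ⊆ Finset.range (k+1) := Finset.range_subset_range.2 (by omega)
    have h1 : ∑ w ∈ Finset.range k, ((J.filter (fun j => d j = (w:ℤ))).card)
        ≤ ∑ w ∈ Finset.range (k+1), ((J.filter (fun j => d j = (w:ℤ))).card) :=
      Finset.sum_le_sum_of_subset hsub
    have h2 : ((J.filter (fun j => d j = (u:ℤ))).card)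
        + ∑ w ∈ (Finset.range k).erase u, ((J.filter (fun j => d j = (w:ℤ))).card)
        = ∑ w ∈ Finset.range k, ((J.filter (fun j => d j = (w:ℤ))).card) :=
      Finset.add_sum_erase _ (fun (w : ℕ) => (J.filter (fun j => d j = ((w:ℕ):ℤ))).card)
        (Finset.mem_range.2 hu)
    have h3 : ((Finset.range k).erase u).card • 1
        ≤ ∑ w ∈ (Finset.range k).erase u, ((J.filter (fun j => d j = (w:ℤ))).card) := by
      apply Finset.card_nsmul_le_sum
      intro w hw
      have hw' := Finset.mem_of_mem_erase hw
      exact hpos w (Finset.mem_range.1 hw')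
    have h4 : ((Finset.range k).erase u).card = k - 1 := by
      rw [Finset.card_erase_of_mem (Finset.mem_range.2 hu), Finset.card_range]
    simp only [h4, smul_eq_mul, mul_one] at h3
    omega
  omega

/-- D: pure endgame lemma. -/
lemma pure_endgame (J : Finset V) (hk : 2 ≤ J.card) (d : V → ℤ) :
    ∃ T ⊆ J, ∀ j ∈ J, (T.card : ℤ) - (if j ∈ T then 1 else 0) ≠ d j := by
  obtain ⟨w, hwk, hA, hB⟩ := exists_good_level J d hk
  set A := J.filter (fun j => d j = (w:ℤ)) with hAdef
  set B := J.filter (fun j => d j = (w:ℤ) - 1) with hBdef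
  have hAJB : A ⊆ J \ B := by
    intro j hj
    simp only [hAdef, hBdef, Finset.mem_filter, Finset.mem_sdiff] at *
    exact ⟨hj.1, fun h => by omega⟩
  have hcard : w ≤ (J \ B).card := by
    have h1 : (J \ B).card + B.card = J.card :=
      Finset.card_sdiff_add_card_eq_card (hBdef ▸ Finset.filter_subset _ J)
    omega
  obtain ⟨T, hAT, hTJB, hTcard⟩ := Finset.exists_subsuperset_card_eq hAJB (by omega) hcard
  refine ⟨T, hTJB.trans (Finset.sdiff_subset), ?_⟩
  intro j hj
  by_cases hjT : j ∈ T
  · simp only [hjT, if_pos]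
    have : j ∉ B := (Finset.mem_sdiff.1 (hTJB hjT)).2
    simp only [hBdef, Finset.mem_filter] at this
    have : ¬ d j = (w:ℤ) - 1 := fun h => this ⟨hj, h⟩
    omega
  · simp only [hjT, if_neg, not_false_iff]
    have : ¬ d j = (w:ℤ) := by
      intro h
      exact hjT (hAT (by simp only [hAdef, Finset.mem_filter]; exact ⟨hj, h⟩))
    omega


/-- Endgame: choice of flips at the last vertex distinguishing it from all neighbours. -/
lemma endgame_choice (J : Finset V) (hk : 2 ≤ J.card) (σ : V → ℤ)
    (hσ : ∀ j ∈ J, σ j = 1 ∨ σ j = -1) (c : V → ℤ) (s : ℤ) :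
    ∃ T ⊆ J, ∀ j ∈ J,
      s + 2 * (∑ l ∈ T, σ l) ≠ c j + 2 * σ j * (if j ∈ T then 1 else 0) := by
  classical
  set Pos := J.filter (fun l => σ l = 1) with hPos
  set Neg := J.filter (fun l => σ l = -1) with hNeg
  set m := Neg.card with hm
  set d' : V → ℤ := fun j =>
    (if (2:ℤ) ∣ (c j - s) then (c j - s)/2 else -(J.card : ℤ) - 5) + m
      - (if σ j = -1 then 1 else 0) with hd'
  obtain ⟨T', hT'J, hgood⟩ := pure_endgame J hk d'
  set T := (Pos ∩ T') ∪ (Neg \ T') with hT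
  have hTJ : T ⊆ J := by
    intro x hx
    rcases Finset.mem_union.1 hx with h | h
    · exact Finset.filter_subset _ _ (Finset.mem_inter.1 h).1
    · exact Finset.filter_subset _ _ (Finset.mem_sdiff.1 h).1
  -- Key1 : ∑_{l ∈ T} σ l = #T' - m
  have hdisjPN : Disjoint (Pos ∩ T') (Neg \ T') := by
    rw [Finset.disjoint_left]
    intro x hx hx'
    have h1 := (Finset.mem_filter.1 (Finset.mem_inter.1 hx).1).2
    have h2 := (Finset.mem_filter.1 (Finset.mem_sdiff.1 hx').1).2
    omega
  have hsplitT' : (Pos ∩ T').card + (Neg ∩ T').card = T'.card := by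
    rw [← Finset.card_union_of_disjoint]
    · congr 1
      rw [← Finset.union_inter_distrib_right]
      rw [Finset.inter_eq_right.2]
      intro x hx
      rcases hσ x (hT'J hx) with h | h
      · exact Finset.mem_union_left _ (Finset.mem_filter.2 ⟨hT'J hx, h⟩)
      · exact Finset.mem_union_right _ (Finset.mem_filter.2 ⟨hT'J hx, h⟩)
    · rw [Finset.disjoint_left]
      intro x hx hx'
      have h1 := (Finset.mem_filter.1 (Finset.mem_inter.1 hx).1).2
      have h2 := (Finset.mem_filter.1 (Finset.mem_inter.1 hx').1).2
      omega
  have hsplitNeg : (Neg \ T').card + (Neg ∩ T').card = m := by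
    rw [hm]
    rw [Finset.card_sdiff_add_card_inter]
  have hKey1 : ∑ l ∈ T, σ l = (T'.card : ℤ) - m := by
    rw [hT, Finset.sum_union hdisjPN]
    have e1 : ∑ l ∈ Pos ∩ T', σ l = ((Pos ∩ T').card : ℤ) := by
      rw [Finset.sum_congr rfl (fun x hx => (Finset.mem_filter.1 (Finset.mem_inter.1 hx).1).2)]
      simp; rfl
    have e2 : ∑ l ∈ Neg \ T', σ l = -(((Neg \ T').card : ℤ)) := by
      rw [Finset.sum_congr rfl (fun x hx => (Finset.mem_filter.1 (Finset.mem_sdiff.1 hx).1).2)]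
      simp; rfl
    rw [e1, e2]
    have := hsplitT'
    have := hsplitNeg
    push_cast
    omega
  refine ⟨T, hTJ, ?_⟩
  intro j hj
  have hgj := hgood j hj
  have hχ : j ∈ T ↔ ((σ j = 1 ∧ j ∈ T') ∨ (σ j = -1 ∧ j ∉ T')) := by
    rw [hT, Finset.mem_union, Finset.mem_inter, Finset.mem_sdiff, hPos, hNeg,
      Finset.mem_filter, Finset.mem_filter]
    constructor
    · rintro (⟨⟨_, h1⟩, h2⟩ | ⟨⟨_, h1⟩, h2⟩)
      · exact Or.inl ⟨h1, h2⟩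
      · exact Or.inr ⟨h1, h2⟩
    · rintro (⟨h1, h2⟩ | ⟨h1, h2⟩)
      · exact Or.inl ⟨⟨hj, h1⟩, h2⟩
      · exact Or.inr ⟨⟨hj, h1⟩, h2⟩
  intro heq
  rw [hKey1] at heq
  by_cases hdvd : (2:ℤ) ∣ (c j - s)
  · obtain ⟨e, he⟩ := hdvd
    have hd'j : d' j = e + m - (if σ j = -1 then 1 else 0) := by
      rw [hd']
      simp only [he]
      rw [if_pos ⟨e, rfl⟩]
      congr 1
      omega
    rcases hσ j hj with h1 | h1
    · have hχ' : (j ∈ T) ↔ (j ∈ T') := by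
        rw [hχ]; constructor
        · rintro (⟨_, h⟩ | ⟨h2, _⟩); exact h; omega
        · intro h; exact Or.inl ⟨h1, h⟩
      rw [hd'] at hgj
      by_cases hjT' : j ∈ T'
      · rw [if_pos hjT'] at hgj
        rw [if_pos (hχ'.2 hjT')] at heq
        simp only [he, if_pos (⟨e, rfl⟩ : (2:ℤ) ∣ 2*e), h1] at hgj
        simp only [if_neg (by omega : ¬ (1:ℤ) = -1)] at hgj
        omega
      · rw [if_neg hjT'] at hgj
        rw [if_neg (fun h => hjT' (hχ'.1 h))] at heq
        simp only [he, if_pos (⟨e, rfl⟩ : (2:ℤ) ∣ 2*e), h1] at hgj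
        simp only [if_neg (by omega : ¬ (1:ℤ) = -1)] at hgj
        omega
    · have hχ' : (j ∈ T) ↔ (j ∉ T') := by
        rw [hχ]; constructor
        · rintro (⟨h2, _⟩ | ⟨_, h⟩); omega; exact h
        · intro h; exact Or.inr ⟨h1, h⟩
      rw [hd'] at hgj
      by_cases hjT' : j ∈ T'
      · rw [if_pos hjT'] at hgj
        rw [if_neg (fun h => (hχ'.1 h) hjT')] at heq
        simp only [he, if_pos (⟨e, rfl⟩ : (2:ℤ) ∣ 2*e), h1, if_pos] at hgj
        omega
      · rw [if_neg hjT'] at hgj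
        rw [if_pos (hχ'.2 hjT')] at heq
        simp only [he, if_pos (⟨e, rfl⟩ : (2:ℤ) ∣ 2*e), h1, if_pos] at hgj
        omega
  · -- parity: LHS - RHS is odd difference
    rcases hσ j hj with h1 | h1 <;>
    · rw [h1] at heq
      apply hdvd
      by_cases hjT : j ∈ T
      · rw [if_pos hjT] at heq; exact ⟨(T'.card : ℤ) - m - 1, by omega⟩
      · rw [if_neg hjT] at heq; exact ⟨(T'.card : ℤ) - m, by omega⟩


variable {V : Type} [Fintype V] [DecidableEq V] (G : SimpleGraph V) [DecidableRel G.Adj]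

/-- boundary crossing lemma -/
lemma boundary (hconn : G.Connected) (s : Finset V) (hne : s.Nonempty)
    (hns : ∃ v, v ∉ s) : ∃ u x, u ∉ s ∧ x ∈ s ∧ G.Adj u x := by
  obtain ⟨y, hy⟩ := hne
  obtain ⟨v, hv⟩ := hns
  obtain ⟨W⟩ := hconn.preconnected v y
  revert hy hv
  induction W with
  | nil => intro hy hv; exact absurd hy hv
  | @cons a b c hadj W ih =>
    intro hy hv
    by_cases hb : b ∈ s
    · exact ⟨a, b, hv, hb, hadj⟩
    · exact ih hy hb

/-- vertex with two distinct neighbours -/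
lemma exists_deg2 (hconn : G.Connected) (hcard : 3 ≤ Fintype.card V) :
    ∃ r y z, y ≠ z ∧ G.Adj r y ∧ G.Adj r z := by
  -- an edge exists
  obtain ⟨u₀, v₀, huv⟩ : ∃ u v : V, u ≠ v := by
    have : 1 < Fintype.card V := by omega
    exact Fintype.exists_pair_of_one_lt_card this
  obtain ⟨W⟩ := hconn.preconnected u₀ v₀
  have hedge : ∃ a b, G.Adj a b := by
    cases W with
    | nil => exact absurd rfl huv
    | cons hadj _ => exact ⟨_, _, hadj⟩
  obtain ⟨a₀, b₀, hab⟩ := hedge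
  have hnsub : ∃ v, v ∉ ({a₀, b₀} : Finset V) := by
    by_contra h
    push_neg at h
    have : (Finset.univ : Finset V) ⊆ {a₀, b₀} := fun v _ => h v
    have h1 := Finset.card_le_card this
    have h2 : ({a₀, b₀} : Finset V).card ≤ 2 := Finset.card_insert_le _ _ |>.trans (by simp)
    simp only [Finset.card_univ] at h1
    omega
  obtain ⟨u, x, hu, hx, hadj⟩ := boundary G hconn {a₀, b₀} ⟨a₀, by simp⟩ hnsub
  simp only [Finset.mem_insert, Finset.mem_singleton] at hx hu
  push_neg at hu
  rcases hx with rfl | rfl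
  · exact ⟨x, u, b₀, by tauto, hadj.symm, hab⟩
  · exact ⟨x, u, a₀, by tauto, hadj.symm, hab.symm⟩

/-- the split form of the forward property -/
def SplitFWD (r : V) (L : List V) : Prop :=
  ∀ pre (u : V) post, L = pre ++ u :: post → u ≠ r → ∃ x ∈ post, G.Adj u x

lemma build_aux (hconn : G.Connected) (r : V) :
    ∀ (m : ℕ) (L0 : List V), L0.Nodup → L0 ≠ [] →
      Fintype.card V - L0.length = m → SplitFWD G r L0 →
      ∃ L : List V, L.Nodup ∧ (∀ v, v ∈ L) ∧ SplitFWD G r L := by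
  intro m
  induction m with
  | zero =>
    intro L0 hnd hne hlen hfwd
    refine ⟨L0, hnd, ?_, hfwd⟩
    have hlen' : L0.length = Fintype.card V := by
      have := List.Nodup.length_le_card hnd
      omega
    have : L0.toFinset = Finset.univ := by
      apply Finset.eq_univ_of_card
      rw [List.toFinset_card_of_nodup hnd, hlen']
    intro v
    have : v ∈ L0.toFinset := this ▸ Finset.mem_univ v
    simpa using this
  | succ m ih =>
    intro L0 hnd hne hlen hfwd
    have hlt : L0.length < Fintype.card V := by omega
    have hns : ∃ v, v ∉ L0.toFinset := by
      by_contra h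
      push_neg at h
      have : (Finset.univ : Finset V) ⊆ L0.toFinset := fun v _ => h v
      have := Finset.card_le_card this
      rw [List.toFinset_card_of_nodup hnd, Finset.card_univ] at this
      omega
    have hne' : L0.toFinset.Nonempty := by
      rcases L0 with _ | ⟨a, L1⟩
      · exact absurd rfl hne
      · exact ⟨a, by simp⟩
    obtain ⟨u, x, hu, hx, hadj⟩ := boundary G hconn L0.toFinset hne' hns
    have hu' : u ∉ L0 := fun h => hu (List.mem_toFinset.2 h)
    have hx' : x ∈ L0 := List.mem_toFinset.1 hx
    refine ih (u :: L0) (List.nodup_cons.2 ⟨hu', hnd⟩) (by simp) (by simp; omega) ?_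
    intro pre u' post hsplit hu'r
    rcases pre with _ | ⟨p0, pre'⟩
    · simp only [List.nil_append, List.cons.injEq] at hsplit
      obtain ⟨rfl, rfl⟩ := hsplit
      exact ⟨x, hx', hadj⟩
    · simp only [List.cons_append, List.cons.injEq] at hsplit
      exact hfwd pre' u' post hsplit.2 hu'r

/-- Existence of a good ordering of the vertices. -/
lemma exists_good_order (hconn : G.Connected) (r : V) :
    ∃ idx : V → ℕ, Function.Injective idx ∧ (∀ v, idx v < Fintype.card V) ∧
      idx r = Fintype.card V - 1 ∧
      (∀ u, u ≠ r → ∃ x, G.Adj u x ∧ idx u < idx x) ∧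
      (∀ i, i < Fintype.card V → ∃ v, idx v = i) := by
  have hfwd0 : SplitFWD G r [r] := by
    intro pre u post hsplit hur
    rcases pre with _ | ⟨p0, pre'⟩
    · simp only [List.nil_append, List.cons.injEq] at hsplit
      exact absurd hsplit.1.symm hur
    · simp only [List.cons_append, List.cons.injEq] at hsplit
      have := hsplit.2
      simp at this
  obtain ⟨L, hnd, hmem, hfwd⟩ := build_aux G hconn r (Fintype.card V - 1) [r]
    (by simp) (by simp) (by simp) hfwd0
  have hlen : L.length = Fintype.card V := by
    have h1 := List.Nodup.length_le_card hnd
    have h2 : Fintype.card V ≤ L.length := by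
      rw [← List.toFinset_card_of_nodup hnd, ← Finset.card_univ]
      apply Finset.card_le_card
      intro v _
      exact List.mem_toFinset.2 (hmem v)
    omega
  set idx : V → ℕ := fun v => L.idxOf v with hidx
  have hidxget : ∀ (i : ℕ) (h : i < L.length), idx (L[i]) = i := fun i h =>
    List.Nodup.idxOf_getElem hnd i h
  have hgetidx : ∀ v, ∃ h : idx v < L.length, L[idx v] = v := fun v =>
    ⟨List.idxOf_lt_length_iff.2 (hmem v), List.getElem_idxOf _⟩
  have hlt : ∀ v, idx v < Fintype.card V := fun v => hlen ▸ (hgetidx v).1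
  have hinj : Function.Injective idx := by
    intro a b hab
    obtain ⟨ha, ha'⟩ := hgetidx a
    obtain ⟨hb, hb'⟩ := hgetidx b
    rw [← ha', ← hb']
    congr 1
  have hdecomp : ∀ (i : ℕ) (h : i < L.length), L = L.take i ++ L[i] :: L.drop (i+1) := by
    intro i h
    conv_lhs => rw [← List.take_append_drop i L]
    rw [List.drop_eq_getElem_cons h]
  have hlast : idx r = Fintype.card V - 1 := by
    have : Nonempty V := ⟨r⟩
    have hpos : 0 < L.length := by
      rw [hlen]; exact Fintype.card_pos
    have hl : L.length - 1 < L.length := by omega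
    by_cases hur : L[L.length - 1] = r
    · rw [← hur, hidxget _ hl, hlen]
    · exfalso
      obtain ⟨x, hx, _⟩ := hfwd (L.take (L.length - 1)) (L[L.length-1]) (L.drop (L.length))
        (by have := hdecomp (L.length - 1) hl; rwa [(by omega : L.length - 1 + 1 = L.length)] at this)
        hur
      rw [List.drop_length] at hx
      exact absurd hx (List.not_mem_nil (a := x))
  refine ⟨idx, hinj, hlt, hlast, ?_, ?_⟩
  · intro u hur
    obtain ⟨h, hget⟩ := hgetidx u
    obtain ⟨x, hx, hadj⟩ := hfwd (L.take (idx u)) u (L.drop (idx u + 1))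
      (by conv_lhs => rw [hdecomp (idx u) h, hget]) hur
    obtain ⟨q, hq, hqx⟩ := List.mem_iff_getElem.1 hx
    refine ⟨x, hadj, ?_⟩
    have hq' : idx u + 1 + q < L.length := by
      rw [List.length_drop] at hq; omega
    have hx1 : L[idx u + 1 + q]'hq' = x := by
      rw [← hqx, List.getElem_drop]
    have hx2 := hidxget (idx u + 1 + q) hq'
    rw [hx1] at hx2
    omega
  · intro i hi
    have h : i < L.length := hlen ▸ hi
    exact ⟨L[i], hidxget i h⟩


/-- weighted degree -/
def sumW (w : Sym2 V → ℤ) (u : V) : ℤ := ∑ x ∈ G.neighborFinset u, w s(u, x)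

/-- E0 : sum of an edge-indicator over the neighbourhood. -/
lemma sum_ite_edge (u a b : V) (hab : a ≠ b) (q : ℤ) :
    ∑ x ∈ G.neighborFinset u, (if s(u, x) = s(a, b) then q else 0) =
      if (u = a ∨ u = b) ∧ G.Adj a b then q else 0 := by
  by_cases hadj : G.Adj a b
  · by_cases hua : u = a
    · subst hua
      rw [if_pos ⟨Or.inl rfl, hadj⟩]
      rw [Finset.sum_eq_single b]
      · rw [if_pos rfl]
      · intro x hx hxb
        rw [if_neg]
        intro hcon
        rw [Sym2.eq_iff] at hcon
        rcases hcon with ⟨h1, h2⟩ | ⟨h1, h2⟩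
        · exact hxb h2
        · exact hab h1
      · intro hb
        exact absurd ((G.mem_neighborFinset _ _).2 hadj) hb
    · by_cases hub : u = b
      · subst hub
        rw [if_pos ⟨Or.inr rfl, hadj⟩]
        rw [Finset.sum_eq_single a]
        · rw [if_pos (by rw [Sym2.eq_iff]; exact Or.inr ⟨rfl, rfl⟩)]
        · intro x hx hxa
          rw [if_neg]
          intro hcon
          rw [Sym2.eq_iff] at hcon
          rcases hcon with ⟨h1, h2⟩ | ⟨h1, h2⟩
          · exact hua h1
          · exact hxa h2
        · intro hb
          exact absurd ((G.mem_neighborFinset _ _).2 hadj.symm) hb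
      · rw [if_neg (by tauto)]
        apply Finset.sum_eq_zero
        intro x hx
        rw [if_neg]
        intro hcon
        rw [Sym2.eq_iff] at hcon
        tauto
  · rw [if_neg (by tauto)]
    apply Finset.sum_eq_zero
    intro x hx
    rw [if_neg]
    intro hcon
    rw [Sym2.eq_iff] at hcon
    rcases hcon with ⟨h1, h2⟩ | ⟨h1, h2⟩
    · exact hadj (h1 ▸ h2 ▸ (G.mem_neighborFinset _ _).1 hx)
    · exact hadj (h1 ▸ h2 ▸ ((G.mem_neighborFinset _ _).1 hx).symm)

section Update

variable (w : Sym2 V → ℤ) (vi : V) (T : Finset V) (g : V → ℤ) (dv : V) (dd : ℤ)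

/-- the updated weight function (flips on edges `T — vi`, plus setting of the δ-edge). -/
def upd : Sym2 V → ℤ := fun e =>
  w e + (∑ j ∈ T, if e = s(j, vi) then g j else 0) + (if e = s(vi, dv) then dd else 0)

variable (hT : T ⊆ G.neighborFinset vi) (hdvT : dv ∉ T) (hdv : G.Adj vi dv)

include hT in
lemma T_ne_vi : ∀ j ∈ T, j ≠ vi := by
  intro j hj h
  subst h
  exact G.irrefl ((G.mem_neighborFinset _ _).1 (hT hj))


include hT hdvT hdv in
lemma upd_sum_vi : sumW G (upd w vi T g dv dd) vi = sumW G w vi + (∑ j ∈ T, g j) + dd := by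
  unfold sumW upd
  rw [Finset.sum_add_distrib, Finset.sum_add_distrib]
  have e1 : ∑ x ∈ G.neighborFinset vi, (∑ j ∈ T, if s(vi,x) = s(j, vi) then g j else 0)
      = ∑ j ∈ T, g j := by
    rw [Finset.sum_comm]
    apply Finset.sum_congr rfl
    intro j hj
    rw [sum_ite_edge G vi j vi (T_ne_vi G vi T hT j hj) (g j)]
    rw [if_pos ⟨Or.inr rfl, ((G.mem_neighborFinset _ _).1 (hT hj)).symm⟩]
  have e2 : ∑ x ∈ G.neighborFinset vi, (if s(vi,x) = s(vi, dv) then dd else 0) = dd := by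
    rw [sum_ite_edge G vi vi dv (G.ne_of_adj hdv) dd]
    rw [if_pos ⟨Or.inl rfl, hdv⟩]
  rw [e1, e2]

include hT hdvT hdv in
lemma upd_sum_flip : ∀ u ∈ T, sumW G (upd w vi T g dv dd) u = sumW G w u + g u := by
  intro u hu
  have hune : u ≠ vi := T_ne_vi G vi T hT u hu
  unfold sumW upd
  rw [Finset.sum_add_distrib, Finset.sum_add_distrib]
  have e1 : ∑ x ∈ G.neighborFinset u, (∑ j ∈ T, if s(u,x) = s(j, vi) then g j else 0)
      = g u := by
    rw [Finset.sum_comm]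
    have hcong : ∀ j ∈ T, (∑ x ∈ G.neighborFinset u, if s(u,x) = s(j, vi) then g j else 0)
        = if ((u = j ∨ u = vi) ∧ G.Adj j vi) then g j else 0 := by
      intro j hj
      exact sum_ite_edge G u j vi (T_ne_vi G vi T hT j hj) (g j)
    rw [Finset.sum_congr rfl hcong]
    rw [Finset.sum_eq_single u]
    · rw [if_pos ⟨Or.inl rfl, ((G.mem_neighborFinset _ _).1 (hT hu)).symm⟩]
    · intro j hj hju
      rw [if_neg]
      rintro ⟨h1 | h1, _⟩
      · exact hju h1.symm
      · exact hune h1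
    · intro h; exact absurd hu h
  have e2 : ∑ x ∈ G.neighborFinset u, (if s(u,x) = s(vi, dv) then dd else 0) = 0 := by
    rw [sum_ite_edge G u vi dv (G.ne_of_adj hdv) dd]
    rw [if_neg]
    rintro ⟨h1 | h1, _⟩
    · exact hune h1
    · rw [h1] at hu; exact hdvT hu
  rw [e1, e2, add_zero]

include hT hdvT hdv in
lemma upd_sum_other : ∀ u, u ≠ vi → u ∉ T → u ≠ dv →
    sumW G (upd w vi T g dv dd) u = sumW G w u := by
  intro u h1 h2 h3
  unfold sumW upd
  rw [Finset.sum_add_distrib, Finset.sum_add_distrib]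
  have e1 : ∑ x ∈ G.neighborFinset u, (∑ j ∈ T, if s(u,x) = s(j, vi) then g j else 0) = 0 := by
    rw [Finset.sum_comm]
    apply Finset.sum_eq_zero
    intro j hj
    rw [sum_ite_edge G u j vi (T_ne_vi G vi T hT j hj) (g j)]
    rw [if_neg]
    rintro ⟨hc | hc, _⟩
    · rw [hc] at h2; exact h2 hj
    · exact h1 hc
  have e2 : ∑ x ∈ G.neighborFinset u, (if s(u,x) = s(vi, dv) then dd else 0) = 0 := by
    rw [sum_ite_edge G u vi dv (G.ne_of_adj hdv) dd]
    rw [if_neg]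
    rintro ⟨hc | hc, _⟩
    · exact h1 hc
    · exact h3 hc
  rw [e1, e2, add_zero, add_zero]

include hT hdvT hdv in
lemma upd_point_unchanged : ∀ a b : V, a ≠ vi → b ≠ vi →
    upd w vi T g dv dd s(a,b) = w s(a,b) := by
  intro a b ha hb
  unfold upd
  have e1 : ∑ j ∈ T, (if s(a,b) = s(j, vi) then g j else 0) = 0 := by
    apply Finset.sum_eq_zero
    intro j hj
    rw [if_neg]
    intro hcon
    rw [Sym2.eq_iff] at hcon
    tauto
  have e2 : (if s(a,b) = s(vi, dv) then dd else 0) = 0 := by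
    rw [if_neg]
    intro hcon
    rw [Sym2.eq_iff] at hcon
    tauto
  rw [e1, e2, add_zero, add_zero]

include hT hdvT hdv in
lemma upd_point_flip : ∀ j ∈ T, upd w vi T g dv dd s(j, vi) = w s(j, vi) + g j := by
  intro j hj
  have hjvi := T_ne_vi G vi T hT j hj
  unfold upd
  have e1 : ∑ l ∈ T, (if s(j,vi) = s(l, vi) then g l else 0) = g j := by
    rw [Finset.sum_eq_single j]
    · rw [if_pos rfl]
    · intro l hl hlj
      rw [if_neg]
      intro hcon
      rw [Sym2.eq_iff] at hcon
      rcases hcon with ⟨h1, _⟩ | ⟨h1, h2⟩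
      · exact hlj h1.symm
      · exact (T_ne_vi G vi T hT l hl) h2.symm
    · intro h; exact absurd hj h
  have e2 : (if s(j,vi) = s(vi, dv) then dd else 0) = 0 := by
    rw [if_neg]
    intro hcon
    rw [Sym2.eq_iff] at hcon
    rcases hcon with ⟨h1, h2⟩ | ⟨h1, h2⟩
    · exact hjvi h1
    · rw [h1] at hj; exact hdvT hj
  rw [e1, e2, add_zero]

include hT hdvT hdv in
lemma upd_point_delta : upd w vi T g dv dd s(vi, dv) = w s(vi, dv) + dd := by
  unfold upd
  have e1 : ∑ l ∈ T, (if s(vi,dv) = s(l, vi) then g l else 0) = 0 := by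
    apply Finset.sum_eq_zero
    intro l hl
    rw [if_neg]
    intro hcon
    rw [Sym2.eq_iff] at hcon
    rcases hcon with ⟨h1, h2⟩ | ⟨h1, h2⟩
    · exact (T_ne_vi G vi T hT l hl) h1.symm
    · rw [← h2] at hl; exact hdvT hl
  rw [e1, if_pos rfl, add_zero]

include hT hdvT hdv in
lemma upd_point_nonflip : ∀ x, x ∉ T → x ≠ dv → x ≠ vi →
    upd w vi T g dv dd s(x, vi) = w s(x, vi) := by
  intro x hx1 hx2 hx3
  unfold upd
  have e1 : ∑ l ∈ T, (if s(x,vi) = s(l, vi) then g l else 0) = 0 := by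
    apply Finset.sum_eq_zero
    intro l hl
    rw [if_neg]
    intro hcon
    rw [Sym2.eq_iff] at hcon
    rcases hcon with ⟨h1, _⟩ | ⟨h1, h2⟩
    · rw [h1] at hx1; exact hx1 hl
    · exact (T_ne_vi G vi T hT l hl) h2.symm
  have e2 : (if s(x,vi) = s(vi, dv) then dd else 0) = 0 := by
    rw [if_neg]
    intro hcon
    rw [Sym2.eq_iff] at hcon
    rcases hcon with ⟨h1, h2⟩ | ⟨h1, h2⟩
    · exact hx3 h1
    · exact hx2 h1
  rw [e1, e2, add_zero, add_zero]

end Update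


section Flips

variable (w : Sym2 V → ℤ) (vi : V) (T : Finset V) (g : V → ℤ)

/-- flips-only update (for the endgame). -/
def updE : Sym2 V → ℤ := fun e =>
  w e + (∑ j ∈ T, if e = s(j, vi) then g j else 0)

variable (hT : T ⊆ G.neighborFinset vi)

include hT in
lemma updE_sum_vi : sumW G (updE w vi T g) vi = sumW G w vi + (∑ j ∈ T, g j) := by
  unfold sumW updE
  rw [Finset.sum_add_distrib]
  congr 1
  rw [Finset.sum_comm]
  apply Finset.sum_congr rfl
  intro j hj
  rw [sum_ite_edge G vi j vi (T_ne_vi G vi T hT j hj) (g j)]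
  rw [if_pos ⟨Or.inr rfl, ((G.mem_neighborFinset _ _).1 (hT hj)).symm⟩]

include hT in
lemma updE_sum_flip : ∀ u ∈ T, sumW G (updE w vi T g) u = sumW G w u + g u := by
  intro u hu
  have hune : u ≠ vi := T_ne_vi G vi T hT u hu
  unfold sumW updE
  rw [Finset.sum_add_distrib]
  congr 1
  rw [Finset.sum_comm]
  have hcong : ∀ j ∈ T, (∑ x ∈ G.neighborFinset u, if s(u,x) = s(j, vi) then g j else 0)
      = if ((u = j ∨ u = vi) ∧ G.Adj j vi) then g j else 0 := by
    intro j hj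
    exact sum_ite_edge G u j vi (T_ne_vi G vi T hT j hj) (g j)
  rw [Finset.sum_congr rfl hcong]
  rw [Finset.sum_eq_single u]
  · rw [if_pos ⟨Or.inl rfl, ((G.mem_neighborFinset _ _).1 (hT hu)).symm⟩]
  · intro j hj hju
    rw [if_neg]
    rintro ⟨h1 | h1, _⟩
    · exact hju h1.symm
    · exact hune h1
  · intro h; exact absurd hu h

include hT in
lemma updE_sum_other : ∀ u, u ≠ vi → u ∉ T → sumW G (updE w vi T g) u = sumW G w u := by
  intro u h1 h2
  unfold sumW updE
  rw [Finset.sum_add_distrib]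
  have e1 : ∑ x ∈ G.neighborFinset u, (∑ j ∈ T, if s(u,x) = s(j, vi) then g j else 0) = 0 := by
    rw [Finset.sum_comm]
    apply Finset.sum_eq_zero
    intro j hj
    rw [sum_ite_edge G u j vi (T_ne_vi G vi T hT j hj) (g j)]
    rw [if_neg]
    rintro ⟨hc | hc, _⟩
    · rw [hc] at h2; exact h2 hj
    · exact h1 hc
  rw [e1, add_zero]

include hT in
lemma updE_point_unchanged : ∀ a b : V, a ≠ vi → b ≠ vi →
    updE w vi T g s(a,b) = w s(a,b) := by
  intro a b ha hb
  unfold updE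
  have e1 : ∑ j ∈ T, (if s(a,b) = s(j, vi) then g j else 0) = 0 := by
    apply Finset.sum_eq_zero
    intro j hj
    rw [if_neg]
    intro hcon
    rw [Sym2.eq_iff] at hcon
    tauto
  rw [e1, add_zero]

include hT in
lemma updE_point_flip : ∀ j ∈ T, updE w vi T g s(j, vi) = w s(j, vi) + g j := by
  intro j hj
  unfold updE
  have e1 : ∑ l ∈ T, (if s(j,vi) = s(l, vi) then g l else 0) = g j := by
    rw [Finset.sum_eq_single j]
    · rw [if_pos rfl]
    · intro l hl hlj
      rw [if_neg]
      intro hcon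
      rw [Sym2.eq_iff] at hcon
      rcases hcon with ⟨h1, _⟩ | ⟨h1, h2⟩
      · exact hlj h1.symm
      · exact (T_ne_vi G vi T hT l hl) h2.symm
    · intro h; exact absurd hj h
  rw [e1]

include hT in
lemma updE_point_nonflip : ∀ x, x ∉ T → x ≠ vi →
    updE w vi T g s(x, vi) = w s(x, vi) := by
  intro x hx1 hx3
  unfold updE
  have e1 : ∑ l ∈ T, (if s(x,vi) = s(l, vi) then g l else 0) = 0 := by
    apply Finset.sum_eq_zero
    intro l hl
    rw [if_neg]
    intro hcon
    rw [Sym2.eq_iff] at hcon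
    rcases hcon with ⟨h1, _⟩ | ⟨h1, h2⟩
    · rw [h1] at hx1; exact hx1 hl
    · exact (T_ne_vi G vi T hT l hl) h2.symm
  rw [e1, add_zero]

end Flips

section Main

variable (r : V) (idx : V → ℕ) (δ : V → V)

/-- the running invariant after `i` processing steps. -/
structure Inv (i : ℕ) (w : Sym2 V → ℤ) (α : V → ℤ) : Prop where
  h1 : ∀ e ∈ G.edgeSet, 1 ≤ w e ∧ w e ≤ 5
  h2 : ∀ u, idx u < i → sumW G w u = α u ∨ sumW G w u = α u + 2
  h2r : ∀ u, idx u < i → α u % 4 = 0 ∨ α u % 4 = 1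
  h3 : ∀ u v, idx u < i → idx v < i → G.Adj u v → α u ≠ α v
  h4 : ∀ u x, idx u < i → G.Adj u x → i ≤ idx x → x ≠ δ u → w s(u,x) = 3
  h5a : ∀ u, idx u < i → i ≤ idx (δ u) → sumW G w u = α u →
    (w s(u, δ u) = 2 ∨ w s(u, δ u) = 3)
  h5b : ∀ u, idx u < i → i ≤ idx (δ u) → sumW G w u = α u + 2 →
    (w s(u, δ u) = 3 ∨ w s(u, δ u) = 4)
  h6 : ∀ u x, i ≤ idx u → i ≤ idx x → G.Adj u x → w s(u,x) = 3

/-- safety of a ±2 flip on a pending edge at a processed vertex. -/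
lemma flip_safe {i : ℕ} {w : Sym2 V → ℤ} {α : V → ℤ} (hInv : Inv G idx δ i w α)
    (j x : V) (hj : idx j < i) (hadj : G.Adj j x) (hx : i ≤ idx x) :
    (sumW G w j = α j → 2 ≤ w s(j,x) ∧ w s(j,x) ≤ 3) ∧
    (sumW G w j ≠ α j → 3 ≤ w s(j,x) ∧ w s(j,x) ≤ 4) := by
  constructor
  · intro hP
    by_cases hδx : x = δ j
    · subst hδx
      have := hInv.h5a j hj hx hP
      omega
    · have := hInv.h4 j x hj hadj hx hδx
      omega
  · intro hP
    have hsum : sumW G w j = α j + 2 := by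
      rcases hInv.h2 j hj with h | h
      · exact absurd h hP
      · exact h
    by_cases hδx : x = δ j
    · subst hδx
      have := hInv.h5b j hj hx hsum
      omega
    · have := hInv.h4 j x hj hadj hx hδx
      omega

/-- choice of the δ-map. -/
lemma exists_delta (hfwd : ∀ u, u ≠ r → ∃ x, G.Adj u x ∧ idx u < idx x) :
    ∃ δ : V → V, ∀ u, u ≠ r → G.Adj u (δ u) ∧ idx u < idx (δ u) ∧
      (∀ x, G.Adj u x → idx u < idx x → idx (δ u) ≤ idx x) := by
  classical
  have hstep : ∀ u : V, ∃ y : V, u ≠ r → (G.Adj u y ∧ idx u < idx y ∧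
      (∀ x, G.Adj u x → idx u < idx x → idx y ≤ idx x)) := by
    intro u
    by_cases hur : u = r
    · exact ⟨u, fun h => absurd hur h⟩
    · obtain ⟨x0, hx0, hx0'⟩ := hfwd u hur
      have hne : ((G.neighborFinset u).filter (fun x => idx u < idx x)).Nonempty :=
        ⟨x0, Finset.mem_filter.2 ⟨(G.mem_neighborFinset _ _).2 hx0, hx0'⟩⟩
      obtain ⟨y, hy, hymin⟩ := Finset.exists_min_image _ idx hne
      rw [Finset.mem_filter] at hy
      refine ⟨y, fun _ => ⟨(G.mem_neighborFinset _ _).1 hy.1, hy.2, ?_⟩⟩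
      intro x hx1 hx2
      exact hymin x (Finset.mem_filter.2 ⟨(G.mem_neighborFinset _ _).2 hx1, hx2⟩)
  choose δ hδ using hstep
  exact ⟨δ, hδ⟩


/-- The main processing step. -/
lemma step (hinj : Function.Injective idx) (hrmax : idx r = Fintype.card V - 1)
    (hδ : ∀ u, u ≠ r → G.Adj u (δ u) ∧ idx u < idx (δ u) ∧
      (∀ x, G.Adj u x → idx u < idx x → idx (δ u) ≤ idx x))
    (i : ℕ) (hi : i + 1 < Fintype.card V)
    (vi : V) (hvi : idx vi = i)
    (w : Sym2 V → ℤ) (α : V → ℤ) (hInv : Inv G idx δ i w α) :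
    ∃ w' α', Inv G idx δ (i+1) w' α' := by
  classical
  have hvir : vi ≠ r := by
    intro h
    rw [h, hrmax] at hvi
    omega
  obtain ⟨hadj_dv, hidx_dv0, hmin_dv⟩ := hδ vi hvir
  set dv := δ vi with hdv_def
  have hidx_dv : i < idx dv := by rw [← hvi]; exact hidx_dv0
  set Bk := (G.neighborFinset vi).filter (fun x => idx x < i) with hBk_def
  set σ : V → ℤ := fun j => if sumW G w j = α j then 1 else -1 with hσ_def
  have hσval : ∀ j, σ j = 1 ∨ σ j = -1 := by
    intro j
    by_cases h : sumW G w j = α j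
    · left; simp [hσ_def, h]
    · right; simp [hσ_def, h]
  have hσpos : ∀ j, sumW G w j = α j → σ j = 1 := by
    intro j h; simp [hσ_def, h]
  have hσneg : ∀ j, ¬ (sumW G w j = α j) → σ j = -1 := by
    intro j h; simp [hσ_def, h]
  have hpm : (Bk.filter (fun j => σ j = 1)).card + (Bk.filter (fun j => σ j = -1)).card
      = Bk.card := by
    have hco : (Bk.filter (fun j => σ j = -1)) = (Bk.filter (fun j => ¬ σ j = 1)) := by
      apply Finset.filter_congr
      intro j _
      rcases hσval j with h | h <;> simp [h]
    rw [hco, Finset.card_filter_add_card_filter_not]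
  set m := (Bk.filter (fun j => σ j = -1)).card with hm_def
  set p := (Bk.filter (fun j => σ j = 1)).card with hp_def
  set k := Bk.card with hk_def
  set s := sumW G w vi with hs_def
  have hcount := mod4_count (s - 2*m - 2) k
  have hximg : (Bk.image α).card ≤ k := by rw [hk_def]; exact Finset.card_image_le
  obtain ⟨x, hxmem, hximgne⟩ : ∃ x, x ∈ ((Finset.Icc (s - 2*m - 2) (s - 2*m - 2 + 2*k + 2)).filter
      (fun y => y % 4 = 0 ∨ y % 4 = 1)) ∧ x ∉ Bk.image α := by
    by_contra hcon
    push_neg at hcon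
    have hsub : ((Finset.Icc (s - 2*m - 2) (s - 2*m - 2 + 2*k + 2)).filter
        (fun y => y % 4 = 0 ∨ y % 4 = 1)) ⊆ Bk.image α := fun y hy => hcon y hy
    have := Finset.card_le_card hsub
    omega
  rw [Finset.mem_filter, Finset.mem_Icc] at hxmem
  obtain ⟨⟨hxlo, hxhi⟩, hxmod⟩ := hxmem
  have hxhi' : x ≤ s + 2*p := by
    have hcast : (k:ℤ) = p + m := by exact_mod_cast hpm.symm
    omega
  obtain ⟨t, rr, ht1, ht2, hrr, hq⟩ := exists_decomp m p (x - s) (by omega) (by omega)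
  obtain ⟨T, hTBk, hTsum⟩ := exists_signed_subset Bk σ (fun j _ => hσval j) t
    (by rw [← hm_def]; omega) (by rw [← hp_def]; omega)
  have hTnbr : T ⊆ G.neighborFinset vi := hTBk.trans (Finset.filter_subset _ _)
  have hdvT : dv ∉ T := by
    intro hmem
    have := (Finset.mem_filter.1 (hTBk hmem)).2
    omega
  set dd : ℤ := if rr = -1 then -1 else 0 with hdd_def
  set g : V → ℤ := fun j => 2 * σ j with hg_def
  set w' := upd w vi T g dv dd with hw'_def
  set α' := Function.update α vi x with hα'_def
  have hne_vi : ∀ u, idx u < i → u ≠ vi := fun u hu h => by rw [h, hvi] at hu; omega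
  have hBk_facts : ∀ j ∈ Bk, idx j < i ∧ G.Adj vi j := by
    intro j hj
    rw [hBk_def, Finset.mem_filter, G.mem_neighborFinset] at hj
    exact ⟨hj.2, hj.1⟩
  have hdv_ne : ∀ u, idx u < i → u ≠ dv := by
    intro u hu h
    rw [h] at hu
    omega
  have hgsum : ∑ j ∈ T, g j = 2 * t := by
    rw [hg_def, ← Finset.mul_sum, hTsum]
  have hsum_vi : sumW G w' vi = s + 2*t + dd := by
    rw [hw'_def, upd_sum_vi G w vi T g dv dd hTnbr hdvT hadj_dv, hgsum, hs_def]
  have hsv2 : rr = -2 → sumW G w' vi = x + 2 := by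
    intro h0
    rw [hsum_vi, hdd_def, if_neg (by omega : ¬ rr = -1)]
    omega
  have hsv1 : rr ≠ -2 → sumW G w' vi = x := by
    intro h0
    rcases hrr with h1 | h1 | h1
    · rw [hsum_vi, hdd_def, if_neg (by omega : ¬ rr = -1)]; omega
    · rw [hsum_vi, hdd_def, if_pos h1]; omega
    · exact absurd h1 h0
  have hflip_sum : ∀ j ∈ T, sumW G w' j = sumW G w j + 2 * σ j := by
    intro j hj
    rw [hw'_def, upd_sum_flip G w vi T g dv dd hTnbr hdvT hadj_dv j hj, hg_def]
  have hother_sum : ∀ u, u ≠ vi → u ∉ T → u ≠ dv → sumW G w' u = sumW G w u := by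
    intro u h1 h2 h3
    rw [hw'_def, upd_sum_other G w vi T g dv dd hTnbr hdvT hadj_dv u h1 h2 h3]
  have hflip_w : ∀ j ∈ T, w' s(j, vi) = w s(j, vi) + 2 * σ j := by
    intro j hj
    rw [hw'_def, upd_point_flip G w vi T g dv dd hTnbr hdvT hadj_dv j hj, hg_def]
  have hj_safety : ∀ j ∈ T, ((1 ≤ w' s(j,vi) ∧ w' s(j,vi) ≤ 5) ∧
      (sumW G w' j = α j ∨ sumW G w' j = α j + 2)) := by
    intro j hj
    obtain ⟨hjlt, hjadj⟩ := hBk_facts j (hTBk hj)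
    have hsafe := flip_safe G idx δ hInv j vi hjlt hjadj.symm (le_of_eq hvi.symm)
    have h2old := hInv.h2 j hjlt
    have hfs := hflip_sum j hj
    have hfw := hflip_w j hj
    by_cases hP : sumW G w j = α j
    · have hb := hsafe.1 hP
      have hσ1 : σ j = 1 := hσpos j hP
      constructor
      · rw [hfw, hσ1]; omega
      · right; rw [hfs, hσ1, hP]; ring
    · have hb := hsafe.2 hP
      have hσ1 : σ j = -1 := hσneg j hP
      have hjs : sumW G w j = α j + 2 := by
        rcases h2old with h | h
        · exact absurd h hP
        · exact h
      constructor
      · rw [hfw, hσ1]; omega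
      · left; rw [hfs, hσ1, hjs]; ring
  have hδedge : w' s(vi, dv) = 3 + dd := by
    rw [hw'_def, upd_point_delta G w vi T g dv dd hTnbr hdvT hadj_dv]
    rw [hInv.h6 vi dv (le_of_eq hvi.symm) (by omega) hadj_dv]
  have hidx_eq_vi : ∀ u, idx u = i → u = vi := by
    intro u hu
    exact hinj (hu.trans hvi.symm)
  have hlt_of : ∀ u, idx u < i + 1 → u ≠ vi → idx u < i := by
    intro u hu hne
    rcases Nat.lt_succ_iff_lt_or_eq.1 hu with h | h
    · exact h
    · exact absurd (hidx_eq_vi u h) hne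
  refine ⟨w', α', ?_, ?_, ?_, ?_, ?_, ?_, ?_, ?_⟩
  · -- h1
    have key2 : ∀ a, G.Adj a vi → 1 ≤ w' s(a,vi) ∧ w' s(a,vi) ≤ 5 := by
      intro a hab
      have hanevi : a ≠ vi := fun h => G.irrefl (h ▸ hab)
      by_cases haT : a ∈ T
      · exact (hj_safety a haT).1
      · by_cases hadv : a = dv
        · rw [hadv, show s(dv, vi) = s(vi, dv) from Sym2.eq_swap, hδedge, hdd_def]
          split <;> omega
        · rw [hw'_def, upd_point_nonflip G w vi T g dv dd hTnbr hdvT hadj_dv a haT hadv hanevi]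
          exact hInv.h1 _ (G.mem_edgeSet.2 hab)
    intro e he
    induction e using Sym2.ind with
    | _ a b =>
      have hab : G.Adj a b := G.mem_edgeSet.1 he
      by_cases hbvi : b = vi
      · subst hbvi; exact key2 a hab
      · by_cases havi : a = vi
        · subst havi
          rw [show s(a, b) = s(b, a) from Sym2.eq_swap]
          exact key2 b hab.symm
        · rw [hw'_def, upd_point_unchanged G w vi T g dv dd hTnbr hdvT hadj_dv a b havi hbvi]
          exact hInv.h1 _ he
  · -- h2
    intro u hu
    by_cases huvi : u = vi
    · subst huvi
      rw [hα'_def, Function.update_self]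
      by_cases h2 : rr = -2
      · right; exact hsv2 h2
      · left; exact hsv1 h2
    · have hu' : idx u < i := hlt_of u hu huvi
      rw [hα'_def, Function.update_of_ne huvi]
      by_cases huT : u ∈ T
      · exact (hj_safety u huT).2
      · rw [hother_sum u (hne_vi u hu') huT (hdv_ne u hu')]
        exact hInv.h2 u hu'
  · -- h2r
    intro u hu
    by_cases huvi : u = vi
    · subst huvi
      rw [hα'_def, Function.update_self]
      exact hxmod
    · rw [hα'_def, Function.update_of_ne huvi]
      exact hInv.h2r u (hlt_of u hu huvi)
  · -- h3
    intro u v hu hv hadj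
    by_cases huvi : u = vi <;> by_cases hvvi : v = vi
    · subst huvi; subst hvvi; exact absurd hadj (G.irrefl)
    · subst huvi
      have hv' : idx v < i := hlt_of v hv hvvi
      have hvBk : v ∈ Bk := by
        rw [hBk_def, Finset.mem_filter, G.mem_neighborFinset]
        exact ⟨hadj, hv'⟩
      rw [hα'_def, Function.update_self, Function.update_of_ne hvvi]
      intro hcon
      exact hximgne (Finset.mem_image.2 ⟨v, hvBk, hcon.symm⟩)
    · subst hvvi
      have hu' : idx u < i := hlt_of u hu huvi
      have huBk : u ∈ Bk := by
        rw [hBk_def, Finset.mem_filter, G.mem_neighborFinset]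
        exact ⟨hadj.symm, hu'⟩
      rw [hα'_def, Function.update_self, Function.update_of_ne huvi]
      intro hcon
      exact hximgne (Finset.mem_image.2 ⟨u, huBk, hcon⟩)
    · rw [hα'_def, Function.update_of_ne huvi, Function.update_of_ne hvvi]
      exact hInv.h3 u v (hlt_of u hu huvi) (hlt_of v hv hvvi) hadj
  · -- h4
    intro u z hu hadj hz hzδ
    have hznvi : z ≠ vi := by
      intro h
      rw [h, hvi] at hz
      omega
    by_cases huvi : u = vi
    · subst huvi
      have hzT : z ∉ T := by
        intro h
        have := (Finset.mem_filter.1 (hTBk h)).2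
        omega
      have hzdv : z ≠ dv := hzδ
      rw [show s(u, z) = s(z, u) from Sym2.eq_swap]
      rw [hw'_def, upd_point_nonflip G w u T g dv dd hTnbr hdvT hadj_dv z hzT hzdv hznvi]
      exact hInv.h6 z u (by omega) (le_of_eq hvi.symm) hadj.symm
    · have hu' : idx u < i := hlt_of u hu huvi
      rw [hw'_def, upd_point_unchanged G w vi T g dv dd hTnbr hdvT hadj_dv u z huvi hznvi]
      exact hInv.h4 u z hu' hadj (by omega) hzδ
  · -- h5a
    intro u hu hpend hsum
    by_cases huvi : u = vi
    · subst huvi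
      rw [hα'_def, Function.update_self] at hsum
      rcases hrr with h0 | h0 | h0
      · rw [hδedge, hdd_def, if_neg (by omega : ¬ rr = -1)]
        right; omega
      · rw [hδedge, hdd_def, if_pos h0]
        left; omega
      · exfalso
        have := hsv2 h0
        omega
    · have hu' : idx u < i := hlt_of u hu huvi
      have hur : u ≠ r := by
        intro h
        rw [h, hrmax] at hu'
        omega
      obtain ⟨huadj, huidx, humin⟩ := hδ u hur
      have huT : u ∉ T := by
        intro hmem
        have hu_adj_vi : G.Adj u vi := ((G.mem_neighborFinset _ _).1 (hTnbr hmem)).symm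
        have := humin vi hu_adj_vi (by omega)
        omega
      have hδune : δ u ≠ vi := by
        intro h
        rw [h, hvi] at hpend
        omega
      rw [hα'_def, Function.update_of_ne huvi] at hsum
      rw [hother_sum u (hne_vi u hu') huT (hdv_ne u hu')] at hsum
      rw [hw'_def, upd_point_unchanged G w vi T g dv dd hTnbr hdvT hadj_dv u (δ u)
        (hne_vi u hu') hδune]
      exact hInv.h5a u hu' (by omega) hsum
  · -- h5b
    intro u hu hpend hsum
    by_cases huvi : u = vi
    · subst huvi
      rw [hα'_def, Function.update_self] at hsum
      rcases hrr with h0 | h0 | h0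
      · exfalso
        have := hsv1 (by omega)
        omega
      · exfalso
        have := hsv1 (by omega)
        omega
      · rw [hδedge, hdd_def, if_neg (by omega : ¬ rr = -1)]
        left; omega
    · have hu' : idx u < i := hlt_of u hu huvi
      have hur : u ≠ r := by
        intro h
        rw [h, hrmax] at hu'
        omega
      obtain ⟨huadj, huidx, humin⟩ := hδ u hur
      have huT : u ∉ T := by
        intro hmem
        have hu_adj_vi : G.Adj u vi := ((G.mem_neighborFinset _ _).1 (hTnbr hmem)).symm
        have := humin vi hu_adj_vi (by omega)
        omega
      have hδune : δ u ≠ vi := by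
        intro h
        rw [h, hvi] at hpend
        omega
      rw [hα'_def, Function.update_of_ne huvi] at hsum
      rw [hother_sum u (hne_vi u hu') huT (hdv_ne u hu')] at hsum
      rw [hw'_def, upd_point_unchanged G w vi T g dv dd hTnbr hdvT hadj_dv u (δ u)
        (hne_vi u hu') hδune]
      exact hInv.h5b u hu' (by omega) hsum
  · -- h6
    intro u z hu hz hadj
    have h1 : u ≠ vi := by
      intro h
      rw [h, hvi] at hu
      omega
    have h2 : z ≠ vi := by
      intro h
      rw [h, hvi] at hz
      omega
    rw [hw'_def, upd_point_unchanged G w vi T g dv dd hTnbr hdvT hadj_dv u z h1 h2]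
    exact hInv.h6 u z (by omega) (by omega) hadj


/-- The endgame at the last vertex. -/
lemma final (hinj : Function.Injective idx) (hrmax : idx r = Fintype.card V - 1)
    (hlt : ∀ v, idx v < Fintype.card V)
    (hr2 : 2 ≤ (G.neighborFinset r).card)
    (w : Sym2 V → ℤ) (α : V → ℤ) (hInv : Inv G idx δ (Fintype.card V - 1) w α) :
    ∃ w' : Sym2 V → ℤ, (∀ e ∈ G.edgeSet, 1 ≤ w' e ∧ w' e ≤ 5) ∧
      ∀ u v, G.Adj u v → sumW G w' u ≠ sumW G w' v := by
  classical
  set n := Fintype.card V with hn_def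
  have hproc : ∀ u, u ≠ r → idx u < n - 1 := by
    intro u hur
    have h1 := hlt u
    have : idx u ≠ n - 1 := fun h => hur (hinj (h.trans hrmax.symm))
    omega
  set σ : V → ℤ := fun j => if sumW G w j = α j then 1 else -1 with hσ_def
  have hσval : ∀ j, σ j = 1 ∨ σ j = -1 := by
    intro j
    by_cases h : sumW G w j = α j
    · left; simp [hσ_def, h]
    · right; simp [hσ_def, h]
  have hσpos : ∀ j, sumW G w j = α j → σ j = 1 := by
    intro j h; simp [hσ_def, h]
  have hσneg : ∀ j, ¬ (sumW G w j = α j) → σ j = -1 := by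
    intro j h; simp [hσ_def, h]
  obtain ⟨T, hTJ, hineq⟩ := endgame_choice (G.neighborFinset r) hr2 σ
    (fun j _ => hσval j) (fun j => sumW G w j) (sumW G w r)
  set g : V → ℤ := fun j => 2 * σ j with hg_def
  set w' := updE w r T g with hw'_def
  have hJfacts : ∀ j ∈ G.neighborFinset r, G.Adj r j ∧ j ≠ r ∧ idx j < n - 1 := by
    intro j hj
    have hadj : G.Adj r j := (G.mem_neighborFinset _ _).1 hj
    have hjr : j ≠ r := fun h => G.irrefl (h ▸ hadj.symm)
    exact ⟨hadj, hjr, hproc j hjr⟩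
  have hsum_r : sumW G w' r = sumW G w r + 2 * ∑ j ∈ T, σ j := by
    rw [hw'_def, updE_sum_vi G w r T g hTJ, hg_def, ← Finset.mul_sum]
  have hsum_T : ∀ j ∈ T, sumW G w' j = sumW G w j + 2 * σ j := by
    intro j hj
    rw [hw'_def, updE_sum_flip G w r T g hTJ j hj, hg_def]
  have hsum_nT : ∀ u, u ≠ r → u ∉ T → sumW G w' u = sumW G w u := by
    intro u h1 h2
    rw [hw'_def, updE_sum_other G w r T g hTJ u h1 h2]
  have hflip_w : ∀ j ∈ T, w' s(j, r) = w s(j, r) + 2 * σ j := by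
    intro j hj
    rw [hw'_def, updE_point_flip G w r T g hTJ j hj, hg_def]
  have hj_safety : ∀ j ∈ T, ((1 ≤ w' s(j,r) ∧ w' s(j,r) ≤ 5) ∧
      (sumW G w' j = α j ∨ sumW G w' j = α j + 2)) := by
    intro j hj
    obtain ⟨hjadj, hjr, hjlt⟩ := hJfacts j (hTJ hj)
    have hsafe := flip_safe G idx δ hInv j r hjlt hjadj.symm (le_of_eq hrmax.symm)
    have h2old := hInv.h2 j hjlt
    have hfs := hsum_T j hj
    have hfw := hflip_w j hj
    by_cases hP : sumW G w j = α j
    · have hb := hsafe.1 hP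
      have hσ1 : σ j = 1 := hσpos j hP
      constructor
      · rw [hfw, hσ1]; omega
      · right; rw [hfs, hσ1, hP]; ring
    · have hb := hsafe.2 hP
      have hσ1 : σ j = -1 := hσneg j hP
      have hjs : sumW G w j = α j + 2 := by
        rcases h2old with h | h
        · exact absurd h hP
        · exact h
      constructor
      · rw [hfw, hσ1]; omega
      · left; rw [hfs, hσ1, hjs]; ring
  have htoggle : ∀ u, u ≠ r → sumW G w' u = α u ∨ sumW G w' u = α u + 2 := by
    intro u hur
    by_cases huT : u ∈ T
    · exact (hj_safety u huT).2
    · rw [hsum_nT u hur huT]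
      exact hInv.h2 u (hproc u hur)
  refine ⟨w', ?_, ?_⟩
  · -- bounds
    have key2 : ∀ a, G.Adj a r → 1 ≤ w' s(a,r) ∧ w' s(a,r) ≤ 5 := by
      intro a hab
      have hanr : a ≠ r := fun h => G.irrefl (h ▸ hab)
      by_cases haT : a ∈ T
      · exact (hj_safety a haT).1
      · rw [hw'_def, updE_point_nonflip G w r T g hTJ a haT hanr]
        exact hInv.h1 _ (G.mem_edgeSet.2 hab)
    intro e he
    induction e using Sym2.ind with
    | _ a b =>
      have hab : G.Adj a b := G.mem_edgeSet.1 he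
      by_cases hbr : b = r
      · subst hbr; exact key2 a hab
      · by_cases har : a = r
        · subst har
          rw [show s(a, b) = s(b, a) from Sym2.eq_swap]
          exact key2 b hab.symm
        · rw [hw'_def, updE_point_unchanged G w r T g hTJ a b har hbr]
          exact hInv.h1 _ he
  · -- distinctness
    intro u v hadj
    by_cases hur : u = r
    · subst hur
      have hvr : v ≠ u := fun h => G.irrefl (h ▸ hadj)
      have hvJ : v ∈ G.neighborFinset u := (G.mem_neighborFinset _ _).2 hadj
      have := hineq v hvJ
      rw [hsum_r]
      by_cases hvT : v ∈ T
      · rw [if_pos hvT, mul_one] at this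
        rw [hsum_T v hvT]
        exact this
      · rw [if_neg hvT, mul_zero, add_zero] at this
        rw [hsum_nT v hvr hvT]
        exact this
    · by_cases hvr : v = r
      · subst hvr
        have huJ : u ∈ G.neighborFinset v := (G.mem_neighborFinset _ _).2 hadj.symm
        have := hineq u huJ
        rw [hsum_r]
        by_cases huT : u ∈ T
        · rw [if_pos huT, mul_one] at this
          rw [hsum_T u huT]
          exact fun h => this (h.symm)
        · rw [if_neg huT, mul_zero, add_zero] at this
          rw [hsum_nT u hur huT]
          exact fun h => this (h.symm)
      · exact doubleton_disj (hInv.h2r u (hproc u hur)) (hInv.h2r v (hproc v hvr))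
          (hInv.h3 u v (hproc u hur) (hproc v hvr) hadj) (htoggle u hur) (htoggle v hvr)

end Main

/-- Full integer-weight version of the theorem. -/
theorem kkp_int (hconn : G.Connected) (hcard : 3 ≤ Fintype.card V) :
    ∃ w : Sym2 V → ℤ, (∀ e ∈ G.edgeSet, 1 ≤ w e ∧ w e ≤ 5) ∧
      ∀ u v, G.Adj u v → sumW G w u ≠ sumW G w v := by
  classical
  obtain ⟨r, y, z, hyz, hry, hrz⟩ := exists_deg2 G hconn hcard
  have hpos : 0 < Fintype.card V := Fintype.card_pos_iff.2 ⟨r⟩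
  have hr2 : 2 ≤ (G.neighborFinset r).card := by
    have hsub : ({y, z} : Finset V) ⊆ G.neighborFinset r := by
      intro a ha
      rcases Finset.mem_insert.1 ha with h | h
      · subst h; exact (G.mem_neighborFinset _ _).2 hry
      · rw [Finset.mem_singleton] at h
        subst h; exact (G.mem_neighborFinset _ _).2 hrz
    have := Finset.card_le_card hsub
    rwa [Finset.card_pair hyz] at this
  obtain ⟨idx, hinj, hlt, hrmax, hfwd, hsurj⟩ := exists_good_order G hconn r
  obtain ⟨δ, hδ⟩ := exists_delta G r idx hfwd
  have base : Inv G idx δ 0 (fun _ => 3) (fun _ => 0) := by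
    refine ⟨?_, ?_, ?_, ?_, ?_, ?_, ?_, ?_⟩
    · intro e _; exact ⟨by norm_num, by norm_num⟩
    · intro u hu; omega
    · intro u hu; omega
    · intro u v hu _ _; omega
    · intro u x hu _ _ _; rfl
    · intro u hu _ _; omega
    · intro u hu _ _; omega
    · intro u x _ _ _; rfl
  have iter : ∀ j : ℕ, j ≤ Fintype.card V - 1 → ∃ w α, Inv G idx δ j w α := by
    intro j
    induction j with
    | zero => intro _; exact ⟨_, _, base⟩
    | succ jj ih =>
      intro hj
      obtain ⟨w, α, hI⟩ := ih (by omega)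
      obtain ⟨vi, hvi⟩ := hsurj jj (by omega)
      exact step G r idx δ hinj hrmax hδ jj (by omega) vi hvi w α hI
  obtain ⟨w, α, hI⟩ := iter (Fintype.card V - 1) le_rfl
  exact final G r idx δ hinj hrmax hlt hr2 w α hI

end KKP

/-- The 1–2–3 Conjecture with labels `{1, …, 5}` (Kalkowski–Karoński–Pfender):
every connected graph on at least `3` vertices admits an edge labelling with
`{1, 2, 3, 4, 5}` distinguishing adjacent vertices by the sums of their incident
labels. -/
theorem kkp_five_labels {V : Type} [Fintype V] [DecidableEq V]
    (G : SimpleGraph V) [DecidableRel G.Adj]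
    (hconn : G.Connected) (hcard : 3 ≤ Fintype.card V) :
    ∃ c : Sym2 V → ℕ,
      (∀ e ∈ G.edgeSet, c e ∈ Finset.Icc 1 5) ∧
      (∀ u v : V, G.Adj u v →
        ∑ w ∈ G.neighborFinset u, c s(u, w) ≠ ∑ w ∈ G.neighborFinset v, c s(v, w)) := by
  classical
  obtain ⟨w, hbounds, hdist⟩ := KKP.kkp_int G hconn hcard
  refine ⟨fun e => (w e).toNat, ?_, ?_⟩
  · intro e he
    have := hbounds e he
    rw [Finset.mem_Icc]
    show (1:ℕ) ≤ (w e).toNat ∧ (w e).toNat ≤ 5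
    omega
  · intro u v hadj hcon
    apply hdist u v hadj
    have key : ∀ y : V, (↑(∑ x ∈ G.neighborFinset y, (w s(y,x)).toNat) : ℤ) = KKP.sumW G w y := by
      intro y
      rw [Nat.cast_sum]
      apply Finset.sum_congr rfl
      intro x hx
      have hadjx : G.Adj y x := (G.mem_neighborFinset _ _).1 hx
      have := hbounds s(y,x) (G.mem_edgeSet.2 hadjx)
      exact Int.toNat_of_nonneg (by omega)
    rw [← key u, ← key v]
    exact congrArg (fun q : ℕ => (q : ℤ)) hcon
end
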